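/- arXiv:2604.23791 — 11 statements merged into one kernel-verified Lean document; each statement's English description precedes it below -/
import Mathlib

section
/- Let (Ω, ℱ, P) be a probability space, let M ≥ 1, and let 𝒜₁, …, 𝒜_M be sub-σ-algebras of ℱ. Let φ⋆ ≥ 0 and suppose that for each 1 ≤ r ≤ M−1, every event C in the σ-algebra generated by 𝒜₁ ∪ ⋯ ∪ 𝒜_r with P(C) > 0, and every event B ∈ 𝒜_{r+1}, one has |P(B ∣ C) − P(B)| ≤ φ⋆. Then for any events C_j ∈ 𝒜_j (j = 1, …, M), writing u_j := P(C_j), we have P(⋂_{j=1}^M C_jᶜ) ≤ ∏_{j=1}^M min(1, 1 − u_j + φ⋆). -/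
open MeasureTheory

/-- Lemma (approximate independence under φ-mixing), product form:
if each σ-algebra `𝒜 (r+1)` is φ-mixing with coefficient at most `φs` from the
σ-algebra generated by `𝒜 1, …, 𝒜 r`, then for events `C j ∈ 𝒜 j`,
`P(⋂ⱼ (C j)ᶜ) ≤ ∏ⱼ min(1, 1 − P(C j) + φs)`. -/
theorem phi_approx_indep_product
    {Ω : Type*} [m0 : MeasurableSpace Ω] (P : Measure Ω) [IsProbabilityMeasure P]
    (M : ℕ) (hM : 1 ≤ M)
    (𝒜 : ℕ → MeasurableSpace Ω) (h𝒜 : ∀ j, 𝒜 j ≤ m0)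
    (φs : ℝ) (hφs : 0 ≤ φs)
    (hmix : ∀ r, 1 ≤ r → r ≤ M - 1 →
      ∀ C : Set Ω, MeasurableSet[(⨆ j ∈ Finset.Icc 1 r, 𝒜 j)] C → 0 < P C →
        ∀ B : Set Ω, MeasurableSet[𝒜 (r + 1)] B →
          |(P (B ∩ C)).toReal / (P C).toReal - (P B).toReal| ≤ φs)
    (C : ℕ → Set Ω) (hC : ∀ j ∈ Finset.Icc 1 M, MeasurableSet[𝒜 j] (C j)) :
    (P (⋂ j ∈ Finset.Icc 1 M, (C j)ᶜ)).toReal ≤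
      ∏ j ∈ Finset.Icc 1 M, min 1 (1 - (P (C j)).toReal + φs) := by
  have hu : ∀ j, (P (C j)).toReal ≤ 1 := by
    intro j
    simpa using ENNReal.toReal_mono ENNReal.one_ne_top (prob_le_one (μ := P) (s := C j))
  have hmin0 : ∀ j, 0 ≤ min 1 (1 - (P (C j)).toReal + φs) := by
    intro j
    refine le_min (by norm_num) ?_
    have := hu j; linarith
  have key : ∀ r, 1 ≤ r → r ≤ M →
      (P (⋂ j ∈ Finset.Icc 1 r, (C j)ᶜ)).toReal ≤
        ∏ j ∈ Finset.Icc 1 r, min 1 (1 - (P (C j)).toReal + φs) := by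
    intro r
    induction r with
    | zero => intro h; omega
    | succ r ih =>
      intro _ hrM
      rcases Nat.eq_zero_or_pos r with h0 | hr
      · subst h0
        simp only [Finset.Icc_self, Finset.prod_singleton, Finset.set_biInter_singleton]
        have hmc : MeasurableSet (C 1) := h𝒜 1 _ (hC 1 (by simp [hM]))
        have : (P (C 1)ᶜ).toReal = 1 - (P (C 1)).toReal := by
          rw [prob_compl_eq_one_sub hmc]
          rw [ENNReal.toReal_sub_of_le prob_le_one (by simp)]
          simp
        rw [this]
        exact le_min (by have := (P (C 1)).toReal_nonneg; linarith) (by linarith)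
      · -- inductive step
        have hrM' : r ≤ M := by omega
        have hIcc : Finset.Icc 1 (r + 1) = insert (r + 1) (Finset.Icc 1 r) := by
          ext x; simp [Finset.mem_Icc]; omega
        have hnm : r + 1 ∉ Finset.Icc 1 r := by simp
        set D : Set Ω := ⋂ j ∈ Finset.Icc 1 r, (C j)ᶜ with hD
        set B : Set Ω := C (r + 1) with hB
        have hDmeas' : MeasurableSet[(⨆ j ∈ Finset.Icc 1 r, 𝒜 j)] D := by
          refine MeasurableSet.biInter (Finset.Icc 1 r).countable_toSet ?_
          intro j hj
          have hjr : j ∈ Finset.Icc 1 r := hj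
          have hj2 := Finset.mem_Icc.mp hjr
          have hjM : j ∈ Finset.Icc 1 M := Finset.mem_Icc.mpr ⟨hj2.1, by omega⟩
          exact le_biSup 𝒜 hjr _ ((hC j hjM).compl)
        have hsup_le : (⨆ j ∈ Finset.Icc 1 r, 𝒜 j) ≤ m0 := by
          refine iSup₂_le fun j _ => h𝒜 j
        have hDmeas : MeasurableSet D := hsup_le D hDmeas'
        have hBmeas : MeasurableSet B := h𝒜 (r + 1) _ (hC (r + 1) (Finset.mem_Icc.mpr ⟨by omega, hrM⟩))
        have hsplit : P (B ∩ D) + P (Bᶜ ∩ D) = P D := by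
          rw [Set.inter_comm B D, Set.inter_comm Bᶜ D, ← Set.diff_eq]
          exact measure_inter_add_diff D hBmeas
        have hfin : ∀ s : Set Ω, P s ≠ ⊤ := fun s => measure_ne_top P s
        have hsplitR : (P (B ∩ D)).toReal + (P (Bᶜ ∩ D)).toReal = (P D).toReal := by
          rw [← ENNReal.toReal_add (hfin _) (hfin _), hsplit]
        have hstep : (P (Bᶜ ∩ D)).toReal ≤
            (P D).toReal * min 1 (1 - (P B).toReal + φs) := by
          rcases eq_or_lt_of_le (zero_le : 0 ≤ P D) with hPD | hPD
          · have hle : P (Bᶜ ∩ D) ≤ P D := measure_mono Set.inter_subset_right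
            have : (P (Bᶜ ∩ D)).toReal ≤ (P D).toReal :=
              ENNReal.toReal_mono (hfin _) hle
            have h0 : (P D).toReal = 0 := by rw [← hPD]; simp
            nlinarith [ENNReal.toReal_nonneg (a := P (Bᶜ ∩ D)), hmin0 (r + 1)]
          · have hmixr := hmix r hr (by omega) D hDmeas' hPD B (hC (r + 1) (Finset.mem_Icc.mpr ⟨by omega, hrM⟩))
            have hc : 0 < (P D).toReal := ENNReal.toReal_pos (by exact hPD.ne') (hfin _)
            have h1 : (P B).toReal - φs ≤ (P (B ∩ D)).toReal / (P D).toReal := by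
              have := abs_le.mp hmixr; linarith [this.1]
            have h2 : (P D).toReal * ((P B).toReal - φs) ≤ (P (B ∩ D)).toReal := by
              have := (le_div_iff₀ hc).mp h1
              nlinarith
            have hle : (P (Bᶜ ∩ D)).toReal ≤ (P D).toReal :=
              ENNReal.toReal_mono (hfin _) (measure_mono Set.inter_subset_right)
            rcases min_cases (1 : ℝ) (1 - (P B).toReal + φs) with ⟨hmeq, _⟩ | ⟨hmeq, _⟩
            · rw [hmeq]; linarith
            · rw [hmeq]; nlinarith
        calc (P (⋂ j ∈ Finset.Icc 1 (r + 1), (C j)ᶜ)).toReal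
            = (P (Bᶜ ∩ D)).toReal := by
              rw [hIcc]; congr 1; rw [Finset.set_biInter_insert]
          _ ≤ (P D).toReal * min 1 (1 - (P B).toReal + φs) := hstep
          _ ≤ (∏ j ∈ Finset.Icc 1 r, min 1 (1 - (P (C j)).toReal + φs)) *
                min 1 (1 - (P B).toReal + φs) := by
              exact mul_le_mul_of_nonneg_right (ih hr hrM') (hmin0 (r + 1))
          _ = ∏ j ∈ Finset.Icc 1 (r + 1), min 1 (1 - (P (C j)).toReal + φs) := by
              rw [hIcc, Finset.prod_insert hnm, mul_comm]
  exact key M hM le_rfl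
end

section
/- Let (Ω, ℱ, P) be a probability space, let M ≥ 1, and let 𝒜₁, …, 𝒜_M be sub-σ-algebras of ℱ. Let φ⋆ ≥ 0 and suppose that for each 1 ≤ r ≤ M−1, every event C in the σ-algebra generated by 𝒜₁ ∪ ⋯ ∪ 𝒜_r with P(C) > 0, and every event B ∈ 𝒜_{r+1}, one has |P(B ∣ C) − P(B)| ≤ φ⋆. Then for any events C_j ∈ 𝒜_j (j = 1, …, M), writing u_j := P(C_j), we have P(⋂_{j=1}^M C_jᶜ) ≤ exp(−∑_{j=1}^M (u_j − φ⋆)₊), where (x)₊ := max(x, 0). -/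
open MeasureTheory

/-- Lemma (approximate independence under φ-mixing), exponential form:
for events `C j ∈ 𝒜 j`, `P(⋂ⱼ (C j)ᶜ) ≤ exp(−∑ⱼ (P(C j) − φs)₊)`. -/
theorem phi_approx_indep_exp
    {Ω : Type*} [m0 : MeasurableSpace Ω] (P : Measure Ω) [IsProbabilityMeasure P]
    (M : ℕ) (hM : 1 ≤ M)
    (𝒜 : ℕ → MeasurableSpace Ω) (h𝒜 : ∀ j, 𝒜 j ≤ m0)
    (φs : ℝ) (hφs : 0 ≤ φs)
    (hmix : ∀ r, 1 ≤ r → r ≤ M - 1 →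
      ∀ C : Set Ω, MeasurableSet[(⨆ j ∈ Finset.Icc 1 r, 𝒜 j)] C → 0 < P C →
        ∀ B : Set Ω, MeasurableSet[𝒜 (r + 1)] B →
          |(P (B ∩ C)).toReal / (P C).toReal - (P B).toReal| ≤ φs)
    (C : ℕ → Set Ω) (hC : ∀ j ∈ Finset.Icc 1 M, MeasurableSet[𝒜 j] (C j)) :
    (P (⋂ j ∈ Finset.Icc 1 M, (C j)ᶜ)).toReal ≤
      Real.exp (-∑ j ∈ Finset.Icc 1 M, max ((P (C j)).toReal - φs) 0) := by
  suffices h : ∀ r, 1 ≤ r → r ≤ M →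
      (P (⋂ j ∈ Finset.Icc 1 r, (C j)ᶜ)).toReal ≤
        Real.exp (-∑ j ∈ Finset.Icc 1 r, max ((P (C j)).toReal - φs) 0) from
    h M hM le_rfl
  intro r hr
  induction r, hr using Nat.le_induction with
  | base =>
    intro _
    have h1mem : (1 : ℕ) ∈ Finset.Icc 1 M := Finset.mem_Icc.mpr ⟨le_rfl, hM⟩
    have hm1 : MeasurableSet (C 1) := h𝒜 1 _ (hC 1 h1mem)
    simp only [Finset.Icc_self, Finset.mem_singleton, Set.iInter_iInter_eq_left,
      Finset.sum_singleton]
    have hcompl : (P (C 1)ᶜ).toReal = 1 - (P (C 1)).toReal := by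
      rw [prob_compl_eq_one_sub hm1,
        ENNReal.toReal_sub_of_le prob_le_one ENNReal.one_ne_top, ENNReal.toReal_one]
    rw [hcompl]
    have hnn : (0 : ℝ) ≤ (P (C 1)).toReal := ENNReal.toReal_nonneg
    have hmle : max ((P (C 1)).toReal - φs) 0 ≤ (P (C 1)).toReal :=
      max_le (by linarith) hnn
    have := Real.add_one_le_exp (-(max ((P (C 1)).toReal - φs) 0))
    linarith
  | succ r hr ih =>
    intro hrM
    have hrM' : r ≤ M := le_trans (Nat.le_succ r) hrM
    have ihr := ih hrM'
    set D : Set Ω := ⋂ j ∈ Finset.Icc 1 r, (C j)ᶜ with hD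
    have hmemM : ∀ j ∈ Finset.Icc 1 r, j ∈ Finset.Icc 1 M := by
      intro j hj
      rw [Finset.mem_Icc] at hj ⊢
      omega
    have hDsup : MeasurableSet[⨆ j ∈ Finset.Icc 1 r, 𝒜 j] D := by
      apply MeasurableSet.biInter (Finset.Icc 1 r).countable_toSet
      intro j hj
      exact le_biSup 𝒜 hj _ (hC j (hmemM j hj)).compl
    have hDm0 : MeasurableSet D :=
      MeasurableSet.biInter (Finset.Icc 1 r).countable_toSet
        (fun j hj => (h𝒜 j _ (hC j (hmemM j hj))).compl)
    have hr1mem : (r + 1) ∈ Finset.Icc 1 M := Finset.mem_Icc.mpr ⟨by omega, hrM⟩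
    have hm1 : MeasurableSet (C (r + 1)) := h𝒜 _ _ (hC _ hr1mem)
    have hset : (⋂ j ∈ Finset.Icc 1 (r + 1), (C j)ᶜ) = (C (r + 1))ᶜ ∩ D := by
      rw [← Finset.insert_Icc_right_eq_Icc_add_one (by omega : 1 ≤ r + 1), Finset.set_biInter_insert]
    have hsum : ∑ j ∈ Finset.Icc 1 (r + 1), max ((P (C j)).toReal - φs) 0
        = (∑ j ∈ Finset.Icc 1 r, max ((P (C j)).toReal - φs) 0)
          + max ((P (C (r + 1))).toReal - φs) 0 := by
      rw [← Finset.insert_Icc_right_eq_Icc_add_one (by omega : 1 ≤ r + 1),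
        Finset.sum_insert (by simp)]
      ring
    rw [hset, hsum]
    set m : ℝ := max ((P (C (r + 1))).toReal - φs) 0 with hm
    have hmnn : 0 ≤ m := le_max_right _ _
    by_cases hDz : P D = 0
    · have : P ((C (r + 1))ᶜ ∩ D) = 0 :=
        le_antisymm (le_trans (measure_mono Set.inter_subset_right) hDz.le) bot_le
      rw [this]
      simp only [ENNReal.toReal_zero]
      positivity
    · have hDpos : 0 < P D := lt_of_le_of_ne bot_le (Ne.symm hDz)
      have hDfin : P D ≠ ⊤ := measure_ne_top P D
      set a : ℝ := (P D).toReal with ha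
      have hapos : 0 < a := ENNReal.toReal_pos hDz hDfin
      set b : ℝ := (P (C (r + 1) ∩ D)).toReal with hb
      set e : ℝ := (P ((C (r + 1))ᶜ ∩ D)).toReal with he
      have hbnn : 0 ≤ b := ENNReal.toReal_nonneg
      have hsplit : b + e = a := by
        rw [hb, he, ha, ← ENNReal.toReal_add (measure_ne_top P _) (measure_ne_top P _)]
        congr 1
        rw [Set.inter_comm (C (r + 1)) D, Set.inter_comm (C (r + 1))ᶜ D, ← Set.diff_eq]
        exact measure_inter_add_diff D hm1
      have hmixr := hmix r hr (by omega) D hDsup hDpos (C (r + 1)) (hC _ hr1mem)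
      have hba : (P (C (r + 1))).toReal - φs ≤ b / a := by
        have := abs_le.mp hmixr
        linarith [this.1]
      have hmb : m * a ≤ b := by
        rw [hm, max_mul_of_nonneg _ _ hapos.le]
        apply max_le
        · calc ((P (C (r + 1))).toReal - φs) * a ≤ (b / a) * a :=
            mul_le_mul_of_nonneg_right hba hapos.le
          _ = b := by field_simp
        · simpa using hbnn
      have hea : e ≤ a * (1 - m) := by nlinarith
      have h1m : 1 - m ≤ Real.exp (-m) := by
        have := Real.add_one_le_exp (-m)
        linarith
      calc e ≤ a * (1 - m) := hea
        _ ≤ a * Real.exp (-m) := mul_le_mul_of_nonneg_left h1m hapos.le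
        _ ≤ Real.exp (-∑ j ∈ Finset.Icc 1 r, max ((P (C j)).toReal - φs) 0)
            * Real.exp (-m) := mul_le_mul_of_nonneg_right ihr (Real.exp_nonneg _)
        _ = Real.exp (-((∑ j ∈ Finset.Icc 1 r, max ((P (C j)).toReal - φs) 0) + m)) := by
            rw [← Real.exp_add]; congr 1; ring
end

section
/- Let (Ω, ℱ, P) be a probability space, let N ≥ 1, let A₁, …, A_N be events, and let L ≥ 0 be an integer. Let φ⋆ ≥ 0 and suppose that for every k with 1 ≤ k and k + L + 1 ≤ N, every event C in σ(A₁, …, A_k) with P(C) > 0, and every event B in σ(A_{k+L+1}, …, A_N), one has |P(B ∣ C) − P(B)| ≤ φ⋆. Then P(⋃_{k=1}^N A_k) ≥ 1 − exp(−(1/(L+1)) ∑_{k=1}^N (P(A_k) − φ⋆)₊). -/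
open MeasureTheory
open scoped ENNReal

/-- Theorem (φ-mixing inequality): if the finite restricted φ-mixing coefficient of the
family `A 1, …, A N` at lag `L + 1` is at most `φs`, then
`P(⋃ₖ A k) ≥ 1 − exp(−(1/(L+1)) ∑ₖ (P(A k) − φs)₊)`. -/
theorem phi_mixing_union_bound
    {Ω : Type*} [MeasurableSpace Ω] (P : Measure Ω) [IsProbabilityMeasure P]
    (N : ℕ) (hN : 1 ≤ N)
    (A : ℕ → Set Ω) (hA : ∀ k ∈ Finset.Icc 1 N, MeasurableSet (A k))
    (L : ℕ) (φs : ℝ) (hφs : 0 ≤ φs)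
    (hmix : ∀ k, 1 ≤ k → k + L + 1 ≤ N →
      ∀ C : Set Ω,
        MeasurableSet[MeasurableSpace.generateFrom (A '' Set.Icc 1 k)] C → 0 < P C →
      ∀ B : Set Ω,
        MeasurableSet[MeasurableSpace.generateFrom (A '' Set.Icc (k + L + 1) N)] B →
          |(P (B ∩ C)).toReal / (P C).toReal - (P B).toReal| ≤ φs) :
    1 - Real.exp (-(1 / ((L : ℝ) + 1)) *
        ∑ k ∈ Finset.Icc 1 N, max ((P (A k)).toReal - φs) 0) ≤
      (P (⋃ k ∈ Finset.Icc 1 N, A k)).toReal := by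
  classical
  set g : ℕ → ℝ := fun k => max ((P (A k)).toReal - φs) 0 with hg
  have hg_nonneg : ∀ k, 0 ≤ g k := fun k => le_max_right _ _
  set E : ℕ → Set Ω := fun n => ⋂ k ∈ Finset.Icc 1 n, (A k)ᶜ with hE
  set f : ℕ → ℝ := fun n => (P (E n)).toReal with hf
  have hf_nonneg : ∀ n, 0 ≤ f n := fun n => ENNReal.toReal_nonneg
  have hf_le_one : ∀ n, f n ≤ 1 := by
    intro n
    have h1 : P (E n) ≤ 1 := prob_le_one
    calc f n ≤ (1 : ℝ≥0∞).toReal := ENNReal.toReal_mono (by simp) h1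
      _ = 1 := by simp
  have hEsub : ∀ {m n : ℕ}, m ≤ n → E n ⊆ E m := by
    intro m n hmn x hx
    simp only [hE, Set.mem_iInter, Finset.mem_Icc] at hx ⊢
    intro k hk
    exact hx k ⟨hk.1, hk.2.trans hmn⟩
  have hf_anti : ∀ {m n : ℕ}, m ≤ n → f n ≤ f m := by
    intro m n hmn
    exact ENNReal.toReal_mono (measure_ne_top _ _) (measure_mono (hEsub hmn))
  have hAm_sub : ∀ {m : ℕ}, 1 ≤ m → E m ⊆ (A m)ᶜ := by
    intro m hm x hx
    simp only [hE, Set.mem_iInter, Finset.mem_Icc] at hx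
    exact hx m ⟨hm, le_rfl⟩
  have hPA_nonneg : ∀ m, (0:ℝ) ≤ (P (A m)).toReal := fun m => ENNReal.toReal_nonneg
  have hg_le : ∀ m, g m ≤ (P (A m)).toReal := by
    intro m
    apply max_le _ (hPA_nonneg m)
    linarith
  -- base bound : f m ≤ exp (-(g m)) for 1 ≤ m ≤ N
  have hPAc : ∀ m, 1 ≤ m → m ≤ N → (P ((A m)ᶜ)).toReal = 1 - (P (A m)).toReal := by
    intro m h1 h2
    have hAm : MeasurableSet (A m) := hA m (Finset.mem_Icc.mpr ⟨h1, h2⟩)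
    rw [prob_compl_eq_one_sub hAm]
    rw [ENNReal.toReal_sub_of_le prob_le_one (by simp)]
    simp
  have base : ∀ m, 1 ≤ m → m ≤ N → f m ≤ Real.exp (-(g m)) := by
    intro m h1 h2
    have h3 : f m ≤ (P ((A m)ᶜ)).toReal :=
      ENNReal.toReal_mono (measure_ne_top _ _) (measure_mono (hAm_sub h1))
    have h4 : 1 - g m ≤ Real.exp (-(g m)) := by
      have := Real.add_one_le_exp (-(g m)); linarith
    have h5 := hg_le m
    rw [hPAc m h1 h2] at h3
    linarith
  -- step bound
  have step : ∀ k, 1 ≤ k → k + L + 1 ≤ N →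
      f (k + L + 1) ≤ Real.exp (-(g (k + L + 1))) * f k := by
    intro k hk1 hkN
    set m := k + L + 1 with hm
    have hmN : m ≤ N := hkN
    have hm1 : 1 ≤ m := by omega
    by_cases hx : (P (A m)).toReal ≤ φs
    · -- g m = 0, use monotonicity
      have : g m = 0 := by
        simp only [hg]
        apply max_eq_right; linarith
      rw [this]
      simpa using hf_anti (show k ≤ m by omega)
    push_neg at hx
    have hgm : g m = (P (A m)).toReal - φs := max_eq_left (by linarith)
    by_cases hzero : P (E k) = 0
    · have hfk : f k = 0 := by simp [hf, hzero]
      have : f m = 0 := by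
        have h0 : P (E m) = 0 := le_antisymm (le_trans (measure_mono (hEsub (show k ≤ m by omega))) (le_of_eq hzero)) zero_le
        simp [hf, h0]
      rw [this, hfk]; simp
    -- main case : apply mixing
    have hpos : 0 < P (E k) := lt_of_le_of_ne zero_le (Ne.symm hzero)
    have hposR : 0 < (P (E k)).toReal := ENNReal.toReal_pos hzero (measure_ne_top _ _)
    have hCgen : MeasurableSet[MeasurableSpace.generateFrom (A '' Set.Icc 1 k)] (E k) := by
      apply MeasurableSet.biInter (Finset.Icc 1 k).countable_toSet
      intro i hi
      simp only [Finset.coe_Icc, Set.mem_Icc] at hi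
      exact (MeasurableSpace.measurableSet_generateFrom
        (Set.mem_image_of_mem A (Set.mem_Icc.mpr ⟨hi.1, hi.2⟩))).compl
    have hBgen : MeasurableSet[MeasurableSpace.generateFrom (A '' Set.Icc (k + L + 1) N)] ((A m)ᶜ) :=
      (MeasurableSpace.measurableSet_generateFrom
        (Set.mem_image_of_mem A (Set.mem_Icc.mpr ⟨le_rfl, hmN⟩))).compl
    have hmix' := hmix k hk1 hkN (E k) hCgen hpos ((A m)ᶜ) hBgen
    have habs : (P ((A m)ᶜ ∩ E k)).toReal / (P (E k)).toReal ≤ (P ((A m)ᶜ)).toReal + φs := by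
      have := abs_le.mp hmix'
      linarith [this.2]
    have hstep1 : (P ((A m)ᶜ ∩ E k)).toReal ≤ ((P ((A m)ᶜ)).toReal + φs) * f k := by
      rw [div_le_iff₀ hposR] at habs
      exact habs
    have hsub : E m ⊆ (A m)ᶜ ∩ E k :=
      Set.subset_inter (hAm_sub hm1) (hEsub (show k ≤ m by omega))
    have hfm : f m ≤ (P ((A m)ᶜ ∩ E k)).toReal :=
      ENNReal.toReal_mono (measure_ne_top _ _) (measure_mono hsub)
    have hrw : (P ((A m)ᶜ)).toReal + φs = 1 - g m := by
      rw [hPAc m hm1 hmN, hgm]; ring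
    have hexp : 1 - g m ≤ Real.exp (-(g m)) := by
      have := Real.add_one_le_exp (-(g m)); linarith
    calc f m ≤ ((P ((A m)ᶜ)).toReal + φs) * f k := le_trans hfm hstep1
      _ = (1 - g m) * f k := by rw [hrw]
      _ ≤ Real.exp (-(g m)) * f k := mul_le_mul_of_nonneg_right hexp (hf_nonneg k)
  -- chain bound along arithmetic progressions
  have chain : ∀ r j, r + 1 + j * (L + 1) ≤ N →
      f (r + 1 + j * (L + 1)) ≤
        Real.exp (-(∑ i ∈ Finset.range (j + 1), g (r + 1 + i * (L + 1)))) := by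
    intro r j
    induction j with
    | zero =>
      intro h
      simpa using base (r + 1) (by omega) (by simpa using h)
    | succ j ih =>
      intro h
      have hk : r + 1 + j * (L + 1) ≤ N := by
        have : (j) * (L+1) ≤ (j+1) * (L+1) := Nat.mul_le_mul_right _ (by omega)
        omega
      have heq : r + 1 + (j + 1) * (L + 1) = (r + 1 + j * (L + 1)) + L + 1 := by ring
      have hstep := step (r + 1 + j * (L + 1)) (by omega) (by omega)
      rw [heq]
      calc f ((r + 1 + j * (L + 1)) + L + 1)
          ≤ Real.exp (-(g ((r + 1 + j * (L + 1)) + L + 1))) * f (r + 1 + j * (L + 1)) := hstep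
        _ ≤ Real.exp (-(g ((r + 1 + j * (L + 1)) + L + 1))) *
              Real.exp (-(∑ i ∈ Finset.range (j + 1), g (r + 1 + i * (L + 1)))) := by
            exact mul_le_mul_of_nonneg_left (ih hk) (Real.exp_nonneg _)
        _ = Real.exp (-(∑ i ∈ Finset.range (j + 1 + 1), g (r + 1 + i * (L + 1)))) := by
            rw [← Real.exp_add]
            congr 1
            rw [Finset.sum_range_succ _ (j + 1), heq]
            ring
  -- fiber bound
  have fiber : ∀ r < L + 1,
      f N ≤ Real.exp (-(∑ k ∈ (Finset.Icc 1 N).filter (fun k => (k - 1) % (L + 1) = r), g k)) := by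
    intro r hr
    by_cases hrn : r + 1 ≤ N
    · set t := (N - (r + 1)) / (L + 1) with ht
      have htle : r + 1 + t * (L + 1) ≤ N := by
        have h1 : t * (L + 1) ≤ N - (r + 1) := Nat.div_mul_le_self _ _
        omega
      have hset : (Finset.Icc 1 N).filter (fun k => (k - 1) % (L + 1) = r)
          = (Finset.range (t + 1)).image (fun i => r + 1 + i * (L + 1)) := by
        ext k
        simp only [Finset.mem_filter, Finset.mem_Icc, Finset.mem_image, Finset.mem_range]
        constructor
        · rintro ⟨⟨hk1, hk2⟩, hkr⟩
          have h4 : (L + 1) * ((k - 1) / (L + 1)) + (k - 1) % (L + 1) = k - 1 :=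
            Nat.div_add_mod _ _
          rw [hkr] at h4
          have hcomm := Nat.mul_comm (L + 1) ((k - 1) / (L + 1))
          have h5 : ((k - 1) / (L + 1)) * (L + 1) ≤ N - (r + 1) := by omega
          have h6 : (k - 1) / (L + 1) ≤ t := by
            rw [ht]
            exact (Nat.le_div_iff_mul_le (Nat.succ_pos L)).mpr h5
          exact ⟨(k - 1) / (L + 1), by omega, by omega⟩
        · rintro ⟨i, hi, rfl⟩
          refine ⟨⟨by omega, ?_⟩, ?_⟩
          · have : i * (L + 1) ≤ t * (L + 1) := Nat.mul_le_mul_right _ (by omega)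
            omega
          · have : r + 1 + i * (L + 1) - 1 = r + i * (L + 1) := by omega
            rw [this, Nat.add_mul_mod_self_right, Nat.mod_eq_of_lt hr]
      have hinj : ∀ x ∈ Finset.range (t + 1), ∀ y ∈ Finset.range (t + 1),
          r + 1 + x * (L + 1) = r + 1 + y * (L + 1) → x = y := by
        intro x _ y _ h
        have h2 : x * (L + 1) = y * (L + 1) := by omega
        exact Nat.eq_of_mul_eq_mul_right (Nat.succ_pos L) h2
      rw [hset, Finset.sum_image hinj]
      calc f N ≤ f (r + 1 + t * (L + 1)) := hf_anti htle
        _ ≤ Real.exp (-(∑ i ∈ Finset.range (t + 1), g (r + 1 + i * (L + 1)))) := chain r t htle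
    · have hempty : (Finset.Icc 1 N).filter (fun k => (k - 1) % (L + 1) = r) = ∅ := by
        apply Finset.filter_eq_empty_iff.mpr
        intro k hk
        simp only [Finset.mem_Icc] at hk
        intro hkr
        -- k ∈ [1, N], N < r + 1, so k - 1 < r < L + 1, so (k-1) % (L+1) = k - 1 ≠ r
        have hklt : k - 1 < L + 1 := by omega
        rw [Nat.mod_eq_of_lt hklt] at hkr
        omega
      rw [hempty]
      simpa using hf_le_one N
  -- partition the sum
  set S : ℝ := ∑ k ∈ Finset.Icc 1 N, g k with hS
  have hpart : S = ∑ r ∈ Finset.range (L + 1),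
      ∑ k ∈ (Finset.Icc 1 N).filter (fun k => (k - 1) % (L + 1) = r), g k := by
    rw [hS]
    exact (Finset.sum_fiberwise_of_maps_to
      (fun k _ => Finset.mem_range.mpr (Nat.mod_lt _ (Nat.succ_pos L))) g).symm
  -- combine
  have hpow : f N ^ (L + 1) ≤ Real.exp (-(1 / ((L : ℝ) + 1)) * S) ^ (L + 1) := by
    calc f N ^ (L + 1) = ∏ _r ∈ Finset.range (L + 1), f N := by
          rw [Finset.prod_const, Finset.card_range]
      _ ≤ ∏ r ∈ Finset.range (L + 1),
            Real.exp (-(∑ k ∈ (Finset.Icc 1 N).filter (fun k => (k - 1) % (L + 1) = r), g k)) := by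
          apply Finset.prod_le_prod (fun _ _ => hf_nonneg N)
          intro r hrr
          exact fiber r (Finset.mem_range.mp hrr)
      _ = Real.exp (∑ r ∈ Finset.range (L + 1),
            -(∑ k ∈ (Finset.Icc 1 N).filter (fun k => (k - 1) % (L + 1) = r), g k)) :=
          (Real.exp_sum _ _).symm
      _ = Real.exp (-S) := by
          congr 1
          rw [hpart]
          exact Finset.sum_neg_distrib _
      _ = Real.exp (-(1 / ((L : ℝ) + 1)) * S) ^ (L + 1) := by
          rw [← Real.exp_nat_mul]
          congr 1
          have hL : ((L : ℝ) + 1) ≠ 0 := by positivity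
          push_cast
          field_simp
  have hfN : f N ≤ Real.exp (-(1 / ((L : ℝ) + 1)) * S) :=
    le_of_pow_le_pow_left₀ (Nat.succ_ne_zero L) (Real.exp_nonneg _) hpow
  -- relate f N and the union
  have hU : MeasurableSet (⋃ k ∈ Finset.Icc 1 N, A k) :=
    MeasurableSet.biUnion (Finset.Icc 1 N).countable_toSet (fun k hk => hA k hk)
  have hEc : E N = (⋃ k ∈ Finset.Icc 1 N, A k)ᶜ := by
    rw [hE]
    simp [Set.compl_iUnion]
  have hPU : (P (⋃ k ∈ Finset.Icc 1 N, A k)).toReal = 1 - f N := by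
    have h1 : P (E N) = 1 - P (⋃ k ∈ Finset.Icc 1 N, A k) := by
      rw [hEc, prob_compl_eq_one_sub hU]
    have h2 : f N = 1 - (P (⋃ k ∈ Finset.Icc 1 N, A k)).toReal := by
      rw [hf]
      simp only [h1]
      rw [ENNReal.toReal_sub_of_le prob_le_one (by simp)]
      simp
    linarith [h2]
  rw [hPU]
  linarith [hfN]
end

section
/- Let (Ω, ℱ, P) be a probability space, let N ≥ 1, let A₁, …, A_N be events, and let L ≥ 0 be an integer. Let φ⋆ ≥ 0 and suppose that for every k with 1 ≤ k and k + L + 1 ≤ N, every event C in σ(A₁, …, A_k) with P(C) > 0, and every event B in σ(A_{k+L+1}, …, A_N), one has |P(B ∣ C) − P(B)| ≤ φ⋆. If in addition φ⋆ ≤ min_{1≤k≤N} P(A_k), then P(⋃_{k=1}^N A_k) ≥ 1 − exp(−(S_N − N·φ⋆)/(L+1)), where S_N := ∑_{k=1}^N P(A_k). -/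
open MeasureTheory

theorem chain_bound
    {Ω : Type*} [MeasurableSpace Ω] (P : Measure Ω) [IsProbabilityMeasure P]
    (N : ℕ)
    (A : ℕ → Set Ω) (hA : ∀ k ∈ Finset.Icc 1 N, MeasurableSet (A k))
    (L : ℕ) (φs : ℝ) (hφs : 0 ≤ φs)
    (hmix : ∀ k, 1 ≤ k → k + L + 1 ≤ N →
      ∀ C : Set Ω,
        MeasurableSet[MeasurableSpace.generateFrom (A '' Set.Icc 1 k)] C → 0 < P C →
      ∀ B : Set Ω,
        MeasurableSet[MeasurableSpace.generateFrom (A '' Set.Icc (k + L + 1) N)] B →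
          |(P (B ∩ C)).toReal / (P C).toReal - (P B).toReal| ≤ φs) :
    ∀ s : Finset ℕ, s ⊆ Finset.Icc 1 N →
      (∀ a ∈ s, ∀ b ∈ s, a < b → a + L + 1 ≤ b) →
      (P (⋂ k ∈ s, (A k)ᶜ)).toReal ≤
        Real.exp (- ∑ k ∈ s, ((P (A k)).toReal - φs)) := by
  intro s
  induction s using Finset.strongInduction with
  | _ s ih =>
    intro hsub hchain
    rcases s.eq_empty_or_nonempty with rfl | hne
    · simp
    · set m := s.max' hne with hm
      have hms : m ∈ s := s.max'_mem hne
      have hmIcc := hsub hms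
      have hm1 : 1 ≤ m := (Finset.mem_Icc.mp hmIcc).1
      have hmN : m ≤ N := (Finset.mem_Icc.mp hmIcc).2
      set s' := s.erase m with hs'
      have hins : insert m s' = s := Finset.insert_erase hms
      have hmns' : m ∉ s' := Finset.notMem_erase _ _
      have hsplit : (⋂ k ∈ s, (A k)ᶜ) = (A m)ᶜ ∩ ⋂ k ∈ s', (A k)ᶜ := by
        rw [← hins, Finset.set_biInter_insert]
      have hsum : ∑ k ∈ s, ((P (A k)).toReal - φs)
          = ((P (A m)).toReal - φs) + ∑ k ∈ s', ((P (A k)).toReal - φs) := by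
        rw [← hins, Finset.sum_insert hmns']
      set C := ⋂ k ∈ s', (A k)ᶜ with hC
      have hAmb : ∀ a ∈ s', MeasurableSet (A a) := fun a ha =>
        hA a (hsub (Finset.mem_of_mem_erase ha))
      have hCmeas : MeasurableSet C :=
        Finset.measurableSet_biInter s' (fun a ha => (hAmb a ha).compl)
      have hBmeas : MeasurableSet (A m) := hA m hmIcc
      have hPB1 : (P (A m)).toReal ≤ 1 := by
        simpa using ENNReal.toReal_mono ENNReal.one_ne_top
          (prob_le_one (μ := P) (s := A m))
      have hPBnn : 0 ≤ (P (A m)).toReal := ENNReal.toReal_nonneg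
      rcases s'.eq_empty_or_nonempty with hs'e | hs'ne
      · -- base case: single element
        have hCuniv : C = Set.univ := by rw [hC, hs'e]; simp
        rw [hsplit, hCuniv, Set.inter_univ, hsum, hs'e, Finset.sum_empty, add_zero]
        have hcompl : (P (A m)ᶜ).toReal = 1 - (P (A m)).toReal := by
          rw [prob_compl_eq_one_sub hBmeas,
            ENNReal.toReal_sub_of_le prob_le_one (by simp)]
          simp
        rw [hcompl]
        have h2 := Real.add_one_le_exp (-((P (A m)).toReal - φs))
        linarith
      · -- inductive step
        have hss' : s' ⊂ s := Finset.erase_ssubset hms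
        have hsub' : s' ⊆ Finset.Icc 1 N := fun a ha => hsub (Finset.mem_of_mem_erase ha)
        have hchain' : ∀ a ∈ s', ∀ b ∈ s', a < b → a + L + 1 ≤ b := fun a ha b hb =>
          hchain a (Finset.mem_of_mem_erase ha) b (Finset.mem_of_mem_erase hb)
        have hIH : (P C).toReal ≤ Real.exp (- ∑ k ∈ s', ((P (A k)).toReal - φs)) :=
          ih s' hss' hsub' hchain'
        have hgap : ∀ a ∈ s', a + L + 1 ≤ m := by
          intro a ha
          have halt : a < m :=
            lt_of_le_of_ne (s.le_max' a (Finset.mem_of_mem_erase ha))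
              (Finset.ne_of_mem_erase ha)
          exact hchain a (Finset.mem_of_mem_erase ha) m hms halt
        obtain ⟨a0, ha0⟩ := hs'ne
        have ha01 : 1 ≤ a0 := (Finset.mem_Icc.mp (hsub' ha0)).1
        have hL1m : L + 1 + 1 ≤ m := by have := hgap a0 ha0; omega
        set k0 := m - (L + 1) with hk0
        have hk01 : 1 ≤ k0 := by omega
        have hk0N : k0 + L + 1 ≤ N := by omega
        have hCgen : MeasurableSet[MeasurableSpace.generateFrom (A '' Set.Icc 1 k0)] C := by
          apply Finset.measurableSet_biInter
          intro a ha
          apply MeasurableSet.compl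
          apply MeasurableSpace.measurableSet_generateFrom
          exact ⟨a, ⟨(Finset.mem_Icc.mp (hsub' ha)).1, by have := hgap a ha; omega⟩, rfl⟩
        have hBgen : MeasurableSet[MeasurableSpace.generateFrom
            (A '' Set.Icc (k0 + L + 1) N)] (A m) := by
          apply MeasurableSpace.measurableSet_generateFrom
          exact ⟨m, ⟨by omega, hmN⟩, rfl⟩
        by_cases hPC : P C = 0
        · have h0 : P ((A m)ᶜ ∩ C) = 0 :=
            le_antisymm (le_trans (measure_mono Set.inter_subset_right) hPC.le) zero_le
          rw [hsplit, h0]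
          simpa using (Real.exp_pos _).le
        · have hPCpos : 0 < P C := pos_iff_ne_zero.mpr hPC
          have hPCne : P C ≠ ⊤ := measure_ne_top P C
          have hpc : 0 < (P C).toReal := ENNReal.toReal_pos hPC hPCne
          have habs := hmix k0 hk01 hk0N C hCgen hPCpos (A m) hBgen
          have hlow2 : (P (A m)).toReal - φs ≤ (P (A m ∩ C)).toReal / (P C).toReal := by
            have h := abs_le.mp habs
            linarith [h.1]
          have hmul : ((P (A m)).toReal - φs) * (P C).toReal ≤ (P (A m ∩ C)).toReal :=
            (le_div_iff₀ hpc).mp hlow2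
          have hadd : (P (C ∩ A m)).toReal + (P (C \ A m)).toReal = (P C).toReal := by
            rw [← ENNReal.toReal_add (measure_ne_top _ _) (measure_ne_top _ _),
              measure_inter_add_diff C hBmeas]
          have hdiff : C \ A m = (A m)ᶜ ∩ C := by
            ext x; simp [Set.mem_diff, and_comm]
          have hcomm : C ∩ A m = A m ∩ C := Set.inter_comm _ _
          rw [hdiff, hcomm] at hadd
          have key : (P ((A m)ᶜ ∩ C)).toReal ≤
              (P C).toReal * (1 - (P (A m)).toReal + φs) := by nlinarith
          have h2 : 1 - (P (A m)).toReal + φs ≤ Real.exp (-((P (A m)).toReal - φs)) := by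
            have := Real.add_one_le_exp (-((P (A m)).toReal - φs))
            linarith
          have h3 : (P C).toReal * (1 - (P (A m)).toReal + φs) ≤
              Real.exp (- ∑ k ∈ s', ((P (A k)).toReal - φs)) *
                Real.exp (-((P (A m)).toReal - φs)) :=
            mul_le_mul hIH h2 (by linarith) (Real.exp_pos _).le
          rw [hsplit, hsum]
          calc (P ((A m)ᶜ ∩ C)).toReal ≤ _ := key
            _ ≤ _ := h3
            _ = Real.exp (-(((P (A m)).toReal - φs) +
                ∑ k ∈ s', ((P (A k)).toReal - φs))) := by
              rw [← Real.exp_add]; congr 1; ring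

/-- Theorem (φ-mixing inequality, clean residual form): if moreover
`φs ≤ min_{1≤k≤N} P(A k)`, then
`P(⋃ₖ A k) ≥ 1 − exp(−(S_N − N·φs)/(L+1))` where `S_N = ∑ₖ P(A k)`. -/
theorem phi_mixing_union_bound_clean
    {Ω : Type*} [MeasurableSpace Ω] (P : Measure Ω) [IsProbabilityMeasure P]
    (N : ℕ) (hN : 1 ≤ N)
    (A : ℕ → Set Ω) (hA : ∀ k ∈ Finset.Icc 1 N, MeasurableSet (A k))
    (L : ℕ) (φs : ℝ) (hφs : 0 ≤ φs)
    (hmix : ∀ k, 1 ≤ k → k + L + 1 ≤ N →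
      ∀ C : Set Ω,
        MeasurableSet[MeasurableSpace.generateFrom (A '' Set.Icc 1 k)] C → 0 < P C →
      ∀ B : Set Ω,
        MeasurableSet[MeasurableSpace.generateFrom (A '' Set.Icc (k + L + 1) N)] B →
          |(P (B ∩ C)).toReal / (P C).toReal - (P B).toReal| ≤ φs)
    (hlow : ∀ k ∈ Finset.Icc 1 N, φs ≤ (P (A k)).toReal) :
    1 - Real.exp (-((∑ k ∈ Finset.Icc 1 N, (P (A k)).toReal) - (N : ℝ) * φs) /
        ((L : ℝ) + 1)) ≤
      (P (⋃ k ∈ Finset.Icc 1 N, A k)).toReal := by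
  set M := L + 1 with hM
  have hMpos : 0 < M := Nat.succ_pos L
  set f : ℕ → ℝ := fun k => (P (A k)).toReal - φs with hf
  set T : ℝ := (∑ k ∈ Finset.Icc 1 N, (P (A k)).toReal) - (N : ℝ) * φs with hT
  have hTsum : ∑ k ∈ Finset.Icc 1 N, f k = T := by
    rw [hT, hf]
    rw [Finset.sum_sub_distrib, Finset.sum_const, Nat.card_Icc]
    simp [nsmul_eq_mul]
  -- fiberwise decomposition over residues mod M
  have hfiber : ∑ r ∈ Finset.range M,
      ∑ k ∈ (Finset.Icc 1 N).filter (fun k => k % M = r), f k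
      = ∑ k ∈ Finset.Icc 1 N, f k :=
    Finset.sum_fiberwise_of_maps_to (fun k _ => Finset.mem_range.mpr (Nat.mod_lt k hMpos)) f
  -- choose a good residue class
  have hex : ∃ r ∈ Finset.range M,
      T / (M : ℝ) ≤ ∑ k ∈ (Finset.Icc 1 N).filter (fun k => k % M = r), f k := by
    apply Finset.exists_le_of_sum_le ⟨0, Finset.mem_range.mpr hMpos⟩
    rw [hfiber, hTsum, Finset.sum_const, Finset.card_range, nsmul_eq_mul]
    rw [mul_div_cancel₀]
    exact_mod_cast hMpos.ne'
  obtain ⟨r, _, hr⟩ := hex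
  set cls := (Finset.Icc 1 N).filter (fun k => k % M = r) with hcls
  have hclsub : cls ⊆ Finset.Icc 1 N := Finset.filter_subset _ _
  have hclchain : ∀ a ∈ cls, ∀ b ∈ cls, a < b → a + L + 1 ≤ b := by
    intro a ha b hb hab
    have hamod := (Finset.mem_filter.mp ha).2
    have hbmod := (Finset.mem_filter.mp hb).2
    have hmodeq : a ≡ b [MOD M] := by
      unfold Nat.ModEq; rw [hamod, hbmod]
    have hdvd : M ∣ b - a := (Nat.modEq_iff_dvd' hab.le).mp hmodeq
    have hge : M ≤ b - a := Nat.le_of_dvd (by omega) hdvd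
    omega
  have hchainB := chain_bound P N A hA L φs hφs hmix cls hclsub hclchain
  -- relate to the union
  set U := ⋃ k ∈ Finset.Icc 1 N, A k with hU
  have hUmeas : MeasurableSet U := (Finset.Icc 1 N).measurableSet_biUnion hA
  have hUc : Uᶜ = ⋂ k ∈ Finset.Icc 1 N, (A k)ᶜ := by
    rw [hU]; simp [Set.compl_iUnion]
  have hUtoReal : (P Uᶜ).toReal = 1 - (P U).toReal := by
    rw [prob_compl_eq_one_sub hUmeas,
      ENNReal.toReal_sub_of_le prob_le_one (by simp)]
    simp
  have hsubset : (⋂ k ∈ Finset.Icc 1 N, (A k)ᶜ) ⊆ ⋂ k ∈ cls, (A k)ᶜ := by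
    intro x hx
    simp only [Set.mem_iInter] at hx ⊢
    exact fun k hk => hx k (hclsub hk)
  have hmono : (P Uᶜ).toReal ≤ (P (⋂ k ∈ cls, (A k)ᶜ)).toReal := by
    apply ENNReal.toReal_mono (measure_ne_top _ _)
    rw [hUc]
    exact measure_mono hsubset
  have hexp : Real.exp (- ∑ k ∈ cls, ((P (A k)).toReal - φs)) ≤
      Real.exp (- (T / (M : ℝ))) := by
    apply Real.exp_le_exp.mpr
    apply neg_le_neg
    exact hr
  have hMcast : ((M : ℕ) : ℝ) = (L : ℝ) + 1 := by push_cast [hM]; ring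
  have hfinal : (P Uᶜ).toReal ≤ Real.exp (- (T / ((L : ℝ) + 1))) := by
    rw [← hMcast]
    exact le_trans hmono (le_trans hchainB hexp)
  rw [hUtoReal] at hfinal
  rw [neg_div]
  linarith
end

section
/- Let (Ω, ℱ, P) be a probability space, let N ≥ 1, let A₁, …, A_N be events, and let φ : ℕ → [0, ∞) be a function such that for every integer L ≥ 0, every k with 1 ≤ k and k + L + 1 ≤ N, every event C in σ(A₁, …, A_k) with P(C) > 0, and every event B in σ(A_{k+L+1}, …, A_N), one has |P(B ∣ C) − P(B)| ≤ φ(L+1). Then P(⋃_{k=1}^N A_k) ≥ 1 − exp(−Ψ), where Ψ := sup over integers L ≥ 0 of (1/(L+1)) ∑_{k=1}^N (P(A_k) − φ(L+1))₊. -/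
open MeasureTheory

private lemma aux_min_exp (p c : ℝ) :
    min 1 (1 - p + c) ≤ Real.exp (-(max (p - c) 0)) := by
  rcases le_total (p - c) 0 with h | h
  · rw [max_eq_right h, neg_zero, Real.exp_zero]
    exact min_le_left _ _
  · rw [max_eq_left h]
    refine le_trans (min_le_right _ _) ?_
    have := Real.add_one_le_exp (-(p - c))
    linarith

private theorem perL_bound
    {Ω : Type*} [MeasurableSpace Ω] (P : Measure Ω) [IsProbabilityMeasure P]
    (N : ℕ) (hN : 1 ≤ N)
    (A : ℕ → Set Ω) (hA : ∀ k ∈ Finset.Icc 1 N, MeasurableSet (A k))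
    (φ₀ : ℝ) (hφ₀ : 0 ≤ φ₀) (L : ℕ)
    (hmixL : ∀ k, 1 ≤ k → k + L + 1 ≤ N →
      ∀ C : Set Ω,
        MeasurableSet[MeasurableSpace.generateFrom (A '' Set.Icc 1 k)] C → 0 < P C →
      ∀ B : Set Ω,
        MeasurableSet[MeasurableSpace.generateFrom (A '' Set.Icc (k + L + 1) N)] B →
          |(P (B ∩ C)).toReal / (P C).toReal - (P B).toReal| ≤ φ₀) :
    (P (⋂ k ∈ Finset.Icc 1 N, (A k)ᶜ)).toReal ≤
      Real.exp (-((1 / ((L : ℝ) + 1)) *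
        ∑ k ∈ Finset.Icc 1 N, max ((P (A k)).toReal - φ₀) 0)) := by
  have hg : 0 < L + 1 := Nat.succ_pos L
  -- the chain lemma
  have chain : ∀ r : ℕ, 1 ≤ r → ∀ m : ℕ, (∀ j, j < m → r + j * (L+1) ≤ N) →
      (P (⋂ j ∈ Finset.range m, (A (r + j * (L+1)))ᶜ)).toReal ≤
        Real.exp (-∑ j ∈ Finset.range m, max ((P (A (r + j * (L+1)))).toReal - φ₀) 0) := by
    intro r hr m
    induction m with
    | zero => intro _; simp
    | succ m ih =>
      intro hle
      have hmN : r + m * (L+1) ≤ N := hle m (Nat.lt_succ_self m)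
      have hr1 : 1 ≤ r + m * (L+1) := le_trans hr (Nat.le_add_right _ _)
      have hAm : MeasurableSet (A (r + m * (L+1))) := hA _ (Finset.mem_Icc.mpr ⟨hr1, hmN⟩)
      have hDsucc : (⋂ j ∈ Finset.range (m+1), (A (r + j * (L+1)))ᶜ) =
          (A (r + m * (L+1)))ᶜ ∩ ⋂ j ∈ Finset.range m, (A (r + j * (L+1)))ᶜ := by
        rw [Finset.range_add_one, Finset.set_biInter_insert]
      have hsum : ∑ j ∈ Finset.range (m+1), max ((P (A (r + j * (L+1)))).toReal - φ₀) 0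
          = (∑ j ∈ Finset.range m, max ((P (A (r + j * (L+1)))).toReal - φ₀) 0)
            + max ((P (A (r + m * (L+1)))).toReal - φ₀) 0 := Finset.sum_range_succ _ m
      set C := ⋂ j ∈ Finset.range m, (A (r + j * (L+1)))ᶜ with hC
      rcases eq_or_lt_of_le (zero_le : 0 ≤ P C) with h0 | hCpos
      · have hz : P ((A (r + m * (L+1)))ᶜ ∩ C) = 0 :=
          measure_mono_null Set.inter_subset_right h0.symm
        rw [hDsucc, hz]
        simpa using (Real.exp_pos _).le
      · have hCtop : P C ≠ ⊤ := measure_ne_top P C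
        have hCposR : 0 < (P C).toReal := ENNReal.toReal_pos hCpos.ne' hCtop
        have hp0 : (0:ℝ) ≤ (P (A (r + m * (L+1)))).toReal := ENNReal.toReal_nonneg
        have hPB : (P (A (r + m * (L+1)))ᶜ).toReal = 1 - (P (A (r + m * (L+1)))).toReal := by
          rw [measure_compl hAm (measure_ne_top _ _), measure_univ,
            ENNReal.toReal_sub_of_le prob_le_one ENNReal.one_ne_top, ENNReal.toReal_one]
        have hkey : (P ((A (r + m * (L+1)))ᶜ ∩ C)).toReal ≤
            min 1 (1 - (P (A (r + m * (L+1)))).toReal + φ₀) * (P C).toReal := by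
          cases m with
          | zero =>
            have hCuniv : C = Set.univ := by simp [hC]
            rw [hCuniv, Set.inter_univ]
            have hPCu : (P (Set.univ : Set Ω)).toReal = 1 := by simp
            rw [hCuniv] at *
            rw [hPCu, mul_one, hPB]
            exact le_min (by linarith) (by linarith)
          | succ m' =>
            have hk1 : 1 ≤ r + m' * (L+1) := le_trans hr (Nat.le_add_right _ _)
            have hidx : r + m' * (L+1) + L + 1 = r + (m'+1) * (L+1) := by ring
            have hkLN : r + m' * (L+1) + L + 1 ≤ N := by rw [hidx]; exact hmN
            have hCmeas : MeasurableSet[MeasurableSpace.generateFrom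
                (A '' Set.Icc 1 (r + m' * (L+1)))] C := by
              refine Finset.measurableSet_biInter _ fun j hj => MeasurableSet.compl
                (MeasurableSpace.measurableSet_generateFrom ?_)
              refine ⟨r + j * (L+1), ⟨le_trans hr (Nat.le_add_right _ _), ?_⟩, rfl⟩
              exact Nat.add_le_add_left
                (Nat.mul_le_mul_right _ (Nat.lt_succ_iff.mp (Finset.mem_range.mp hj))) r
            have hBmeas : MeasurableSet[MeasurableSpace.generateFrom
                (A '' Set.Icc (r + m' * (L+1) + L + 1) N)] (A (r + (m'+1) * (L+1)))ᶜ := by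
              refine MeasurableSet.compl (MeasurableSpace.measurableSet_generateFrom ?_)
              exact ⟨r + (m'+1) * (L+1), ⟨le_of_eq hidx, by rw [← hidx]; exact hkLN⟩, rfl⟩
            have habs := hmixL _ hk1 hkLN C hCmeas hCpos _ hBmeas
            have hle2 := (abs_le.mp habs).2
            have h3 : (P ((A (r + (m'+1) * (L+1)))ᶜ ∩ C)).toReal ≤
                ((P (A (r + (m'+1) * (L+1)))ᶜ).toReal + φ₀) * (P C).toReal :=
              (div_le_iff₀ hCposR).mp (by linarith)
            have h4 : (P ((A (r + (m'+1) * (L+1)))ᶜ ∩ C)).toReal ≤ (P C).toReal :=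
              ENNReal.toReal_mono hCtop (measure_mono Set.inter_subset_right)
            rcases le_total (1:ℝ) (1 - (P (A (r + (m'+1) * (L+1)))).toReal + φ₀) with hmn | hmn
            · rw [min_eq_left hmn, one_mul]; exact h4
            · rw [min_eq_right hmn]
              rw [hPB] at h3
              exact h3
        calc (P (⋂ j ∈ Finset.range (m+1), (A (r + j * (L+1)))ᶜ)).toReal
            = (P ((A (r + m * (L+1)))ᶜ ∩ C)).toReal := by rw [hDsucc]
          _ ≤ min 1 (1 - (P (A (r + m * (L+1)))).toReal + φ₀) * (P C).toReal := hkey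
          _ ≤ Real.exp (-(max ((P (A (r + m * (L+1)))).toReal - φ₀) 0)) *
                Real.exp (-∑ j ∈ Finset.range m, max ((P (A (r + j * (L+1)))).toReal - φ₀) 0) := by
              refine mul_le_mul (aux_min_exp _ _) (ih fun j hj => hle j (Nat.lt_succ_of_lt hj))
                ENNReal.toReal_nonneg (Real.exp_pos _).le
          _ = Real.exp (-∑ j ∈ Finset.range (m+1), max ((P (A (r + j * (L+1)))).toReal - φ₀) 0) := by
              rw [← Real.exp_add, hsum]; congr 1; ring
  -- counting lemma
  have hMr : ∀ r j : ℕ, (j < (N + (L+1) - r) / (L+1) ↔ r + j * (L+1) ≤ N) := by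
    intro r j
    rw [Nat.lt_iff_add_one_le, Nat.le_div_iff_mul_le hg, add_one_mul]
    generalize j * (L+1) = t
    omega
  have hinv : ∀ k : ℕ, 1 ≤ k → (k-1) % (L+1) + 1 + (k-1) / (L+1) * (L+1) = k := by
    intro k hk
    have h := Nat.mod_add_div' (k-1) (L+1)
    generalize (k-1) % (L+1) = a at h ⊢
    generalize (k-1) / (L+1) * (L+1) = b at h ⊢
    omega
  -- reindexing the sum by residue classes
  have sumT : ∑ k ∈ Finset.Icc 1 N, max ((P (A k)).toReal - φ₀) 0
      = ∑ r ∈ Finset.Icc 1 (L+1), ∑ j ∈ Finset.range ((N + (L+1) - r) / (L+1)),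
          max ((P (A (r + j * (L+1)))).toReal - φ₀) 0 := by
    rw [Finset.sum_sigma' (Finset.Icc 1 (L+1))
      (fun r => Finset.range ((N + (L+1) - r) / (L+1)))
      (fun r j => max ((P (A (r + j * (L+1)))).toReal - φ₀) 0)]
    refine Finset.sum_nbij' (fun k => ⟨(k-1) % (L+1) + 1, (k-1) / (L+1)⟩)
      (fun p => p.1 + p.2 * (L+1)) ?_ ?_ ?_ ?_ ?_
    · intro k hk
      obtain ⟨hk1, hkN⟩ := Finset.mem_Icc.mp hk
      refine Finset.mem_sigma.mpr ⟨Finset.mem_Icc.mpr ⟨Nat.le_add_left _ _, ?_⟩,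
        Finset.mem_range.mpr ((hMr _ _).mpr ?_)⟩
      · show (k-1) % (L+1) + 1 ≤ L + 1
        have := Nat.mod_lt (k-1) hg; omega
      · show (k-1) % (L+1) + 1 + (k-1) / (L+1) * (L+1) ≤ N
        rw [hinv k hk1]; exact hkN
    · rintro ⟨r, j⟩ hp
      simp only [Finset.mem_sigma, Finset.mem_Icc, Finset.mem_range] at hp
      obtain ⟨⟨hr1, hrg⟩, hj⟩ := hp
      have hjN := (hMr r j).mp hj
      dsimp only
      exact Finset.mem_Icc.mpr ⟨le_trans hr1 (Nat.le_add_right _ _), hjN⟩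
    · intro k hk
      dsimp only
      exact hinv k (Finset.mem_Icc.mp hk).1
    · rintro ⟨r, j⟩ hp
      simp only [Finset.mem_sigma, Finset.mem_Icc, Finset.mem_range] at hp
      obtain ⟨⟨hr1, hrg⟩, hj⟩ := hp
      have h3 : r + j * (L+1) - 1 = (r - 1) + j * (L+1) := by
        generalize j * (L+1) = t; omega
      have hmod : (r + j * (L+1) - 1) % (L+1) + 1 = r := by
        rw [h3, Nat.add_mul_mod_self_right, Nat.mod_eq_of_lt (by omega : r - 1 < L + 1)]
        omega
      have hdiv : (r + j * (L+1) - 1) / (L+1) = j := by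
        rw [h3, Nat.add_mul_div_right _ _ hg, Nat.div_eq_of_lt (by omega : r - 1 < L + 1)]
        omega
      exact Sigma.ext hmod (heq_of_eq hdiv)
    · intro k hk
      dsimp only
      rw [hinv k (Finset.mem_Icc.mp hk).1]
  -- choose the best residue class
  obtain ⟨r, hrmem, hrT⟩ : ∃ r ∈ Finset.Icc 1 (L+1),
      (∑ k ∈ Finset.Icc 1 N, max ((P (A k)).toReal - φ₀) 0) / ((L:ℝ)+1) ≤
        ∑ j ∈ Finset.range ((N + (L+1) - r) / (L+1)),
          max ((P (A (r + j * (L+1)))).toReal - φ₀) 0 := by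
    refine Finset.exists_le_of_sum_le ⟨1, Finset.mem_Icc.mpr ⟨le_refl 1, by omega⟩⟩ ?_
    rw [Finset.sum_const, Nat.card_Icc, ← sumT]
    have hcast : ((L + 1 + 1 - 1 : ℕ) : ℝ) = (L:ℝ) + 1 := by push_cast; ring
    rw [nsmul_eq_mul, hcast, mul_div_cancel₀]
    positivity
  obtain ⟨hr1, hrg⟩ := Finset.mem_Icc.mp hrmem
  have hsubset : (⋂ k ∈ Finset.Icc 1 N, (A k)ᶜ) ⊆
      ⋂ j ∈ Finset.range ((N + (L+1) - r) / (L+1)), (A (r + j * (L+1)))ᶜ := by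
    intro ω hω
    simp only [Set.mem_iInter] at hω ⊢
    intro j hj
    refine hω _ (Finset.mem_Icc.mpr ⟨le_trans hr1 (Nat.le_add_right _ _),
      (hMr r j).mp (Finset.mem_range.mp hj)⟩)
  have hchain := chain r hr1 ((N + (L+1) - r) / (L+1)) (fun j hj => (hMr r j).mp hj)
  calc (P (⋂ k ∈ Finset.Icc 1 N, (A k)ᶜ)).toReal
      ≤ (P (⋂ j ∈ Finset.range ((N + (L+1) - r) / (L+1)), (A (r + j * (L+1)))ᶜ)).toReal :=
        ENNReal.toReal_mono (measure_ne_top _ _) (measure_mono hsubset)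
    _ ≤ Real.exp (-∑ j ∈ Finset.range ((N + (L+1) - r) / (L+1)),
          max ((P (A (r + j * (L+1)))).toReal - φ₀) 0) := hchain
    _ ≤ Real.exp (-((1 / ((L : ℝ) + 1)) *
          ∑ k ∈ Finset.Icc 1 N, max ((P (A k)).toReal - φ₀) 0)) := by
        apply Real.exp_le_exp.mpr
        have : (1 / ((L : ℝ) + 1)) * ∑ k ∈ Finset.Icc 1 N, max ((P (A k)).toReal - φ₀) 0
            = (∑ k ∈ Finset.Icc 1 N, max ((P (A k)).toReal - φ₀) 0) / ((L:ℝ)+1) := by ring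
        rw [this]
        linarith

/-- Corollary (optimised exponent): if `φ (L+1)` bounds the finite restricted φ-mixing
coefficient of the family at every lag `L + 1`, then
`P(⋃ₖ A k) ≥ 1 − exp(−Ψ)` with
`Ψ = sup_{L ≥ 0} (1/(L+1)) ∑ₖ (P(A k) − φ(L+1))₊`. -/
theorem phi_mixing_union_bound_optimised
    {Ω : Type*} [MeasurableSpace Ω] (P : Measure Ω) [IsProbabilityMeasure P]
    (N : ℕ) (hN : 1 ≤ N)
    (A : ℕ → Set Ω) (hA : ∀ k ∈ Finset.Icc 1 N, MeasurableSet (A k))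
    (φ : ℕ → ℝ) (hφ : ∀ n, 0 ≤ φ n)
    (hmix : ∀ L : ℕ, ∀ k, 1 ≤ k → k + L + 1 ≤ N →
      ∀ C : Set Ω,
        MeasurableSet[MeasurableSpace.generateFrom (A '' Set.Icc 1 k)] C → 0 < P C →
      ∀ B : Set Ω,
        MeasurableSet[MeasurableSpace.generateFrom (A '' Set.Icc (k + L + 1) N)] B →
          |(P (B ∩ C)).toReal / (P C).toReal - (P B).toReal| ≤ φ (L + 1)) :
    1 - Real.exp (-(⨆ L : ℕ, (1 / ((L : ℝ) + 1)) *
        ∑ k ∈ Finset.Icc 1 N, max ((P (A k)).toReal - φ (L + 1)) 0)) ≤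
      (P (⋃ k ∈ Finset.Icc 1 N, A k)).toReal := by
  set p := (P (⋃ k ∈ Finset.Icc 1 N, A k)).toReal with hp
  have hU : MeasurableSet (⋃ k ∈ Finset.Icc 1 N, A k) := Finset.measurableSet_biUnion _ hA
  have hcompl : (⋃ k ∈ Finset.Icc 1 N, A k)ᶜ = ⋂ k ∈ Finset.Icc 1 N, (A k)ᶜ := by
    simp [Set.compl_iUnion]
  have hq : (P (⋂ k ∈ Finset.Icc 1 N, (A k)ᶜ)).toReal = 1 - p := by
    rw [← hcompl, measure_compl hU (measure_ne_top _ _), measure_univ,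
      ENNReal.toReal_sub_of_le prob_le_one ENNReal.one_ne_top, ENNReal.toReal_one]
  have hper : ∀ L : ℕ, 1 - p ≤ Real.exp (-((1 / ((L:ℝ)+1)) *
      ∑ k ∈ Finset.Icc 1 N, max ((P (A k)).toReal - φ (L+1)) 0)) := by
    intro L
    rw [← hq]
    exact perL_bound P N hN A hA (φ (L+1)) (hφ _) L (hmix L)
  rcases le_or_gt (1 - p) 0 with h | h
  · have := Real.exp_pos (-(⨆ L : ℕ, (1 / ((L : ℝ) + 1)) *
      ∑ k ∈ Finset.Icc 1 N, max ((P (A k)).toReal - φ (L + 1)) 0))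
    linarith
  · have hsup : (⨆ L : ℕ, (1 / ((L : ℝ) + 1)) *
        ∑ k ∈ Finset.Icc 1 N, max ((P (A k)).toReal - φ (L + 1)) 0) ≤ -Real.log (1 - p) := by
      refine ciSup_le fun L => ?_
      have h2 := (Real.log_le_iff_le_exp h).mpr (hper L)
      linarith
    have h3 : Real.log (1 - p) ≤ -(⨆ L : ℕ, (1 / ((L : ℝ) + 1)) *
        ∑ k ∈ Finset.Icc 1 N, max ((P (A k)).toReal - φ (L + 1)) 0) := by linarith
    have h4 := Real.exp_le_exp.mpr h3
    rw [Real.exp_log h] at h4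
    linarith
end

section
/- Let (Ω, ℱ, P) be a probability space, let N ≥ 1, let A₁, …, A_N be events, and let L ≥ 0 be an integer. Let α⋆ ≥ 0 and suppose that for every k with 1 ≤ k and k + L + 1 ≤ N, every event C in σ(A₁, …, A_k), and every event B in σ(A_{k+L+1}, …, A_N), one has |P(C ∩ B) − P(C)·P(B)| ≤ α⋆. Then P(⋃_{k=1}^N A_k) ≥ 1 − exp(−S_N/(L+1)) − ⌈N/(L+1)⌉·α⋆, where S_N := ∑_{k=1}^N P(A_k). -/
open MeasureTheory

/-- Theorem (α-mixing inequality): if the finite restricted strong-mixing coefficient of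
the family `A 1, …, A N` at lag `L + 1` is at most `αs`, then
`P(⋃ₖ A k) ≥ 1 − exp(−S_N/(L+1)) − ⌈N/(L+1)⌉·αs`. -/
theorem alpha_mixing_union_bound
    {Ω : Type*} [MeasurableSpace Ω] (P : Measure Ω) [IsProbabilityMeasure P]
    (N : ℕ) (hN : 1 ≤ N)
    (A : ℕ → Set Ω) (hA : ∀ k ∈ Finset.Icc 1 N, MeasurableSet (A k))
    (L : ℕ) (αs : ℝ) (hαs : 0 ≤ αs)
    (hmix : ∀ k, 1 ≤ k → k + L + 1 ≤ N →
      ∀ C : Set Ω,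
        MeasurableSet[MeasurableSpace.generateFrom (A '' Set.Icc 1 k)] C →
      ∀ B : Set Ω,
        MeasurableSet[MeasurableSpace.generateFrom (A '' Set.Icc (k + L + 1) N)] B →
          |(P (C ∩ B)).toReal - (P C).toReal * (P B).toReal| ≤ αs) :
    1 - Real.exp (-(∑ k ∈ Finset.Icc 1 N, (P (A k)).toReal) / ((L : ℝ) + 1)) -
        (⌈(N : ℝ) / ((L : ℝ) + 1)⌉₊ : ℝ) * αs ≤
      (P (⋃ k ∈ Finset.Icc 1 N, A k)).toReal := by
  classical
  set q := L + 1 with hqdef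
  have hq : 0 < q := Nat.succ_pos L
  have hqR : (0:ℝ) < (q:ℝ) := by exact_mod_cast hq
  have hqcast : ((q:ℕ):ℝ) = (L:ℝ) + 1 := by rw [hqdef]; push_cast; ring
  set S : ℝ := ∑ k ∈ Finset.Icc 1 N, (P (A k)).toReal with hS
  have hle1 : ∀ s : Set Ω, (P s).toReal ≤ 1 := fun s => by
    simpa using ENNReal.toReal_mono ENNReal.one_ne_top (prob_le_one (μ := P) (s := s))
  have hcompl : ∀ s : Set Ω, MeasurableSet s → (P sᶜ).toReal = 1 - (P s).toReal := by
    intro s hs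
    rw [prob_compl_eq_one_sub hs, ENNReal.toReal_sub_of_le prob_le_one ENNReal.one_ne_top,
      ENNReal.toReal_one]
  -- choose a residue class with large sum
  have hfib : ∑ j ∈ Finset.range q,
      ∑ k ∈ (Finset.Icc 1 N).filter (fun k => (k-1) % q = j), (P (A k)).toReal = S := by
    rw [hS]
    exact Finset.sum_fiberwise_of_maps_to (fun k _ => Finset.mem_range.2 (Nat.mod_lt _ hq)) _
  obtain ⟨j, hjmem, hjsum⟩ : ∃ j ∈ Finset.range q, S / q ≤
      ∑ k ∈ (Finset.Icc 1 N).filter (fun k => (k-1) % q = j), (P (A k)).toReal := by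
    apply Finset.exists_le_of_sum_le ⟨0, Finset.mem_range.2 hq⟩
    rw [hfib, Finset.sum_const, Finset.card_range, nsmul_eq_mul,
      mul_div_cancel₀ _ (ne_of_gt hqR)]
  have hj : j < q := Finset.mem_range.1 hjmem
  set c : ℕ := (N + q - j - 1) / q with hcdef
  set g : ℕ → ℕ := fun i => j + 1 + i * q with hg
  have hc : ∀ i, i < c ↔ g i ≤ N := by
    intro i
    rw [Nat.lt_iff_add_one_le, hcdef, Nat.le_div_iff_mul_le hq, add_one_mul]
    simp only [hg]
    generalize i * q = t
    omega
  have hg1 : ∀ i, 1 ≤ g i := fun i =>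
    le_trans (by omega : 1 ≤ j + 1) (Nat.le_add_right _ _)
  have hgN : ∀ i, i < c → g i ∈ Finset.Icc 1 N := fun i hi =>
    Finset.mem_Icc.2 ⟨hg1 i, (hc i).1 hi⟩
  have hAm : ∀ i, i < c → MeasurableSet (A (g i)) := fun i hi => hA _ (hgN i hi)
  -- main induction
  have key : ∀ m, m ≤ c →
      (P (⋂ i ∈ Finset.range m, (A (g i))ᶜ)).toReal ≤
        ∏ i ∈ Finset.range m, (1 - (P (A (g i))).toReal) + (m:ℝ) * αs := by
    intro m
    induction m with
    | zero => intro _; simp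
    | succ m ih =>
      intro hmc
      have hm : m < c := hmc
      have hEq : ⋂ i ∈ Finset.range (m+1), (A (g i))ᶜ =
          (⋂ i ∈ Finset.range m, (A (g i))ᶜ) ∩ (A (g m))ᶜ := by
        rw [Finset.range_add_one, Finset.set_biInter_insert]
        exact Set.inter_comm _ _
      have hprodsucc : ∏ i ∈ Finset.range (m+1), (1 - (P (A (g i))).toReal) =
          (1 - (P (A (g m))).toReal) * ∏ i ∈ Finset.range m, (1 - (P (A (g i))).toReal) := by
        rw [Finset.range_add_one, Finset.prod_insert (by simp)]
      rcases Nat.eq_zero_or_pos m with hm0 | hm1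
      · subst hm0
        have hBc : (P ((A (g 0))ᶜ)).toReal = 1 - (P (A (g 0))).toReal :=
          hcompl _ (hAm 0 hm)
        have huniv : (⋂ i ∈ Finset.range 0, (A (g i))ᶜ) = Set.univ := by simp
        rw [hEq, huniv, Set.univ_inter, hprodsucc]
        simp only [Finset.range_zero, Finset.prod_empty, mul_one]
        push_cast
        linarith [hBc]
      · -- mixing step
        set k := g (m-1) with hk
        have hmul : (m - 1) * q + q = m * q := by
          conv_rhs => rw [← Nat.sub_add_cancel hm1]
          ring
        have hkL : k + L + 1 = g m := by
          rw [hk]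
          simp only [hg]
          rw [show j + 1 + (m-1) * q + L + 1 = j + 1 + ((m-1) * q + q) by rw [hqdef]; ring,
            hmul]
        have hk1 : 1 ≤ k := hg1 _
        have hkN : k + L + 1 ≤ N := by rw [hkL]; exact (hc m).1 hm
        have hCmeas : MeasurableSet[MeasurableSpace.generateFrom (A '' Set.Icc 1 k)]
            (⋂ i ∈ Finset.range m, (A (g i))ᶜ) := by
          apply Finset.measurableSet_biInter
          intro i hi
          apply MeasurableSet.compl
          apply MeasurableSpace.measurableSet_generateFrom
          refine ⟨g i, ⟨hg1 i, ?_⟩, rfl⟩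
          have : i ≤ m - 1 := by have := Finset.mem_range.1 hi; omega
          simp only [hk, hg]
          exact Nat.add_le_add_left (Nat.mul_le_mul_right q this) _
        have hBmeas : MeasurableSet[MeasurableSpace.generateFrom
            (A '' Set.Icc (k + L + 1) N)] ((A (g m))ᶜ) := by
          apply MeasurableSet.compl
          apply MeasurableSpace.measurableSet_generateFrom
          exact ⟨g m, ⟨le_of_eq hkL, (hc m).1 hm⟩, rfl⟩
        have habs := hmix k hk1 hkN _ hCmeas _ hBmeas
        have h1 : (P ((⋂ i ∈ Finset.range m, (A (g i))ᶜ) ∩ (A (g m))ᶜ)).toReal ≤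
            (P (⋂ i ∈ Finset.range m, (A (g i))ᶜ)).toReal * (P ((A (g m))ᶜ)).toReal + αs := by
          have := (abs_le.1 habs).2
          linarith
        have hPB : (P ((A (g m))ᶜ)).toReal = 1 - (P (A (g m))).toReal := hcompl _ (hAm m hm)
        have hPB0 : (0:ℝ) ≤ (P ((A (g m))ᶜ)).toReal := ENNReal.toReal_nonneg
        have hPB1 : (P ((A (g m))ᶜ)).toReal ≤ 1 := hle1 _
        have hProd0 : (0:ℝ) ≤ ∏ i ∈ Finset.range m, (1 - (P (A (g i))).toReal) :=
          Finset.prod_nonneg (fun i _ => by linarith [hle1 (A (g i))])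
        have hPC0 : (0:ℝ) ≤ (P (⋂ i ∈ Finset.range m, (A (g i))ᶜ)).toReal :=
          ENNReal.toReal_nonneg
        have hC := ih (le_of_lt hm)
        have hm0R : (0:ℝ) ≤ (m:ℝ) := Nat.cast_nonneg m
        rw [hEq, hprodsucc]
        push_cast
        nlinarith [mul_le_mul_of_nonneg_right hC hPB0,
          mul_nonneg (mul_nonneg hm0R hαs) (sub_nonneg.2 hPB1)]
  -- identify the filtered class with the arithmetic progression
  have hTeq : (Finset.Icc 1 N).filter (fun k => (k-1) % q = j) =
      (Finset.range c).image g := by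
    ext k
    simp only [Finset.mem_filter, Finset.mem_Icc, Finset.mem_image, Finset.mem_range]
    constructor
    · rintro ⟨⟨h1, h2⟩, h3⟩
      have hdm : q * ((k-1)/q) + (k-1) % q = k - 1 := Nat.div_add_mod _ _
      obtain ⟨t, ht⟩ : ∃ t, t = q * ((k-1)/q) := ⟨_, rfl⟩
      rw [← ht] at hdm
      have hkval : g ((k-1)/q) = k := by
        simp only [hg]
        rw [mul_comm, ← ht]
        omega
      exact ⟨(k-1)/q, (hc _).2 (by rw [hkval]; exact h2), hkval⟩
    · rintro ⟨i, hi, rfl⟩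
      refine ⟨⟨hg1 i, (hc i).1 hi⟩, ?_⟩
      simp only [hg]
      have h1 : j + 1 + i * q - 1 = j + i * q := by
        generalize i * q = t; omega
      rw [h1, Nat.add_mul_mod_self_right, Nat.mod_eq_of_lt hj]
  have hginj : ∀ x ∈ Finset.range c, ∀ y ∈ Finset.range c, g x = g y → x = y := by
    intro x _ y _ h
    simp only [hg] at h
    exact Nat.eq_of_mul_eq_mul_right hq (Nat.add_left_cancel h)
  have hsum2 : S / q ≤ ∑ i ∈ Finset.range c, (P (A (g i))).toReal := by
    rw [hTeq, Finset.sum_image hginj] at hjsum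
    exact hjsum
  -- product bound
  have hprod : ∏ i ∈ Finset.range c, (1 - (P (A (g i))).toReal) ≤ Real.exp (-(S/q)) := by
    calc ∏ i ∈ Finset.range c, (1 - (P (A (g i))).toReal)
        ≤ ∏ i ∈ Finset.range c, Real.exp (-(P (A (g i))).toReal) :=
          Finset.prod_le_prod (fun i _ => by linarith [hle1 (A (g i))])
            (fun i _ => by linarith [Real.add_one_le_exp (-(P (A (g i))).toReal)])
      _ = Real.exp (∑ i ∈ Finset.range c, -(P (A (g i))).toReal) := (Real.exp_sum _ _).symm
      _ ≤ Real.exp (-(S/q)) := by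
          apply Real.exp_le_exp.2
          rw [Finset.sum_neg_distrib]
          linarith
  -- cardinality bound
  have hcard : (c:ℝ) ≤ (⌈(N:ℝ) / ((L:ℝ) + 1)⌉₊ : ℝ) := by
    rcases Nat.eq_zero_or_pos c with h0 | h0
    · simp [h0]
    · have h1 : c - 1 < c := Nat.sub_lt h0 one_pos
      have h2 : g (c-1) ≤ N := (hc _).1 h1
      have h3 : (c-1) * q < N := by
        refine lt_of_lt_of_le ?_ h2
        simp only [hg]
        omega
      have h4 : ((c:ℕ) - 1 : ℕ) < ⌈(N:ℝ) / ((L:ℝ) + 1)⌉₊ := by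
        rw [Nat.lt_ceil, lt_div_iff₀ (by rw [← hqcast]; exact hqR)]
        rw [← hqcast]
        exact_mod_cast h3
      have : c ≤ ⌈(N:ℝ) / ((L:ℝ) + 1)⌉₊ := by omega
      exact_mod_cast this
  -- assemble
  set U := ⋃ i ∈ Finset.range c, A (g i) with hU
  have hUm : MeasurableSet U :=
    Finset.measurableSet_biUnion _ (fun i hi => hAm i (Finset.mem_range.1 hi))
  have hUc : Uᶜ = ⋂ i ∈ Finset.range c, (A (g i))ᶜ := by
    rw [hU]
    simp [Set.compl_iUnion]
  have hUcompl : (P Uᶜ).toReal = 1 - (P U).toReal := hcompl _ hUm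
  have hsub : U ⊆ ⋃ k ∈ Finset.Icc 1 N, A k := by
    rw [hU]
    apply Set.iUnion₂_subset
    intro i hi
    exact Set.subset_iUnion₂ (s := fun k (_ : k ∈ Finset.Icc 1 N) => A k) (g i) (hgN i (Finset.mem_range.1 hi))
  have hmono : (P U).toReal ≤ (P (⋃ k ∈ Finset.Icc 1 N, A k)).toReal :=
    ENNReal.toReal_mono (measure_ne_top _ _) (measure_mono hsub)
  have hkey := key c le_rfl
  rw [← hUc] at hkey
  have hcα : (c:ℝ) * αs ≤ (⌈(N:ℝ) / ((L:ℝ) + 1)⌉₊ : ℝ) * αs :=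
    mul_le_mul_of_nonneg_right hcard hαs
  have hSdiv : -(S) / ((L:ℝ) + 1) = -(S/q) := by
    rw [← hqcast]; ring
  rw [hSdiv]
  linarith
end

section
/- Let (Ω, ℱ, P) be a probability space, let N ≥ 1, let A₁, …, A_N be events with p_min := min_{1≤k≤N} P(A_k) > 0, and let L ≥ 0 be an integer. Let α⋆ ≥ 0 and suppose that for every k with 1 ≤ k and k + L + 1 ≤ N, every event C in σ(A₁, …, A_k), and every event B in σ(A_{k+L+1}, …, A_N), one has |P(C ∩ B) − P(C)·P(B)| ≤ α⋆. Then P(⋃_{k=1}^N A_k) ≥ 1 − exp(−S_N/(L+1)) − α⋆/(1 − exp(−p_min)), where S_N := ∑_{k=1}^N P(A_k). -/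
open MeasureTheory

/-- Corollary (sharpened α-mixing bound under a lower mass): with
`pmin = min_{1≤k≤N} P(A k) > 0`,
`P(⋃ₖ A k) ≥ 1 − exp(−S_N/(L+1)) − αs/(1 − exp(−pmin))`. -/
theorem alpha_mixing_union_bound_lower_mass
    {Ω : Type*} [MeasurableSpace Ω] (P : Measure Ω) [IsProbabilityMeasure P]
    (N : ℕ) (hN : 1 ≤ N)
    (A : ℕ → Set Ω) (hA : ∀ k ∈ Finset.Icc 1 N, MeasurableSet (A k))
    (pmin : ℝ) (hpmin : pmin = sInf ((fun k => (P (A k)).toReal) '' Set.Icc 1 N))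
    (hpmin0 : 0 < pmin)
    (L : ℕ) (αs : ℝ) (hαs : 0 ≤ αs)
    (hmix : ∀ k, 1 ≤ k → k + L + 1 ≤ N →
      ∀ C : Set Ω,
        MeasurableSet[MeasurableSpace.generateFrom (A '' Set.Icc 1 k)] C →
      ∀ B : Set Ω,
        MeasurableSet[MeasurableSpace.generateFrom (A '' Set.Icc (k + L + 1) N)] B →
          |(P (C ∩ B)).toReal - (P C).toReal * (P B).toReal| ≤ αs) :
    1 - Real.exp (-(∑ k ∈ Finset.Icc 1 N, (P (A k)).toReal) / ((L : ℝ) + 1)) -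
        αs / (1 - Real.exp (-pmin)) ≤
      (P (⋃ k ∈ Finset.Icc 1 N, A k)).toReal := by
  set m : ℕ := L + 1 with hm
  set p : ℕ → ℝ := fun k => (P (A k)).toReal with hpdef
  set r : ℝ := Real.exp (-pmin) with hrdef
  have hr0 : 0 ≤ r := Real.exp_nonneg _
  have hr1 : r < 1 := by
    rw [hrdef]
    exact Real.exp_lt_one_iff.mpr (by linarith)
  have hp0 : ∀ k, 0 ≤ p k := fun k => ENNReal.toReal_nonneg
  have hp1 : ∀ k, p k ≤ 1 := by
    intro k
    have h := (ENNReal.toReal_le_toReal (measure_ne_top P _) ENNReal.one_ne_top).mpr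
      (prob_le_one (μ := P) (s := A k))
    simpa using h
  have hbdd : BddBelow ((fun k => (P (A k)).toReal) '' Set.Icc 1 N) := by
    refine ⟨0, ?_⟩
    rintro x ⟨k, -, rfl⟩
    exact ENNReal.toReal_nonneg
  have hpmin_le : ∀ k, 1 ≤ k → k ≤ N → pmin ≤ p k := by
    intro k h1 h2
    rw [hpmin]
    exact csInf_le hbdd ⟨k, ⟨h1, h2⟩, rfl⟩
  have hAmeas : ∀ k, 1 ≤ k → k ≤ N → MeasurableSet (A k) := fun k h1 h2 =>
    hA k (Finset.mem_Icc.mpr ⟨h1, h2⟩)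
  have hGnonneg : ∀ n : ℕ, 0 ≤ ∑ t ∈ Finset.range n, r ^ t := by
    intro n
    exact Finset.sum_nonneg fun t _ => pow_nonneg hr0 t
  have hGle : ∀ n : ℕ, (∑ t ∈ Finset.range n, r ^ t) ≤ 1 / (1 - r) := by
    intro n
    rw [geom_sum_eq (ne_of_lt hr1)]
    rw [show r ^ n - 1 = -(1 - r ^ n) by ring, show r - 1 = -(1 - r) by ring,
      neg_div_neg_eq]
    have h1r : (0:ℝ) < 1 - r := by linarith
    have hrn : 0 ≤ r ^ n := pow_nonneg hr0 n
    gcongr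
    linarith
  -- Key induction
  have key : ∀ n : ℕ, ∀ T : Finset ℕ,
      T.card ≤ n → (∀ k ∈ T, 1 ≤ k ∧ k ≤ N) →
      (∀ a ∈ T, ∀ b ∈ T, a < b → a + m ≤ b) →
      (P (⋂ k ∈ T, (A k)ᶜ)).toReal ≤
        Real.exp (-(∑ k ∈ T, p k)) + αs * ∑ t ∈ Finset.range n, r ^ t := by
    intro n
    induction n with
    | zero =>
      intro T hcard _ _
      have hTe : T = ∅ := Finset.card_eq_zero.mp (Nat.le_zero.mp hcard)
      subst hTe
      simp
    | succ n ih =>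
      intro T hcard hmem hsep
      rcases T.eq_empty_or_nonempty with rfl | hTne
      · have := mul_nonneg hαs (hGnonneg (n + 1))
        simp only [Finset.notMem_empty, Set.iInter_of_empty, Set.iInter_univ,
          Finset.sum_empty, neg_zero, Real.exp_zero, measure_univ, ENNReal.toReal_one]
        linarith
      set M := T.max' hTne with hMdef
      have hMT : M ∈ T := T.max'_mem hTne
      obtain ⟨hM1, hMN⟩ := hmem M hMT
      set T' := T.erase M with hT'def
      have hcard' : T'.card ≤ n := by
        have h := Finset.card_erase_of_mem hMT
        rw [← hT'def] at h
        omega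
      have hmem' : ∀ k ∈ T', 1 ≤ k ∧ k ≤ N := fun k hk =>
        hmem k (Finset.mem_of_mem_erase hk)
      have hsep' : ∀ a ∈ T', ∀ b ∈ T', a < b → a + m ≤ b := fun a ha b hb hab =>
        hsep a (Finset.mem_of_mem_erase ha) b (Finset.mem_of_mem_erase hb) hab
      have hTinsert : T = insert M T' := (Finset.insert_erase hMT).symm
      have hsplit : (⋂ k ∈ T, (A k)ᶜ) = (⋂ k ∈ T', (A k)ᶜ) ∩ (A M)ᶜ := by
        rw [hTinsert, Finset.set_biInter_insert]
        exact Set.inter_comm _ _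
      have hsum : (∑ k ∈ T, p k) = p M + ∑ k ∈ T', p k := by
        rw [hTinsert, Finset.sum_insert (Finset.notMem_erase _ _)]
      have hPM : (P ((A M)ᶜ)).toReal = 1 - p M := by
        rw [prob_compl_eq_one_sub (hAmeas M hM1 hMN),
          ENNReal.toReal_sub_of_le prob_le_one ENNReal.one_ne_top, ENNReal.toReal_one]
      have h1pM : 1 - p M ≤ Real.exp (-(p M)) := by
        have := Real.add_one_le_exp (-(p M))
        linarith
      have h1pMr : 1 - p M ≤ r := by
        have h2 : Real.exp (-(p M)) ≤ r := by
          rw [hrdef]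
          exact Real.exp_le_exp.mpr (by have := hpmin_le M hM1 hMN; linarith)
        linarith
      rcases T'.eq_empty_or_nonempty with hT'e | hT'ne
      · -- T = {M}
        rw [hsplit, hT'e, hsum, hT'e]
        simp only [Finset.notMem_empty, Set.iInter_of_empty, Set.iInter_univ,
          Set.univ_inter, Finset.sum_empty, add_zero]
        have hG := mul_nonneg hαs (hGnonneg (n + 1))
        rw [hPM]
        linarith
      · -- main mixing step
        set M' := T'.max' hT'ne with hM'def
        have hM'T' : M' ∈ T' := T'.max'_mem hT'ne
        have hM'T : M' ∈ T := Finset.mem_of_mem_erase hM'T'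
        have hM'ne : M' ≠ M := Finset.ne_of_mem_erase hM'T'
        have hM'lt : M' < M := lt_of_le_of_ne (T.le_max' M' hM'T) hM'ne
        have hM'sep : M' + m ≤ M := hsep M' hM'T M hMT hM'lt
        have hM'1 : 1 ≤ M' := (hmem' M' hM'T').1
        have hkk1 : 1 ≤ M - m := by omega
        have hkkN : (M - m) + L + 1 ≤ N := by omega
        have hC : MeasurableSet[MeasurableSpace.generateFrom (A '' Set.Icc 1 (M - m))]
            (⋂ k ∈ T', (A k)ᶜ) := by
          refine MeasurableSet.biInter T'.countable_toSet fun i hi => ?_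
          have hiM' : i ≤ M' := T'.le_max' i hi
          have hmemi : A i ∈ A '' Set.Icc 1 (M - m) :=
            ⟨i, ⟨(hmem' i hi).1, by omega⟩, rfl⟩
          exact (MeasurableSpace.measurableSet_generateFrom hmemi).compl
        have hB : MeasurableSet[MeasurableSpace.generateFrom
            (A '' Set.Icc ((M - m) + L + 1) N)] ((A M)ᶜ) := by
          have hmemM : A M ∈ A '' Set.Icc ((M - m) + L + 1) N :=
            ⟨M, ⟨by omega, hMN⟩, rfl⟩
          exact (MeasurableSpace.measurableSet_generateFrom hmemM).compl
        have hmx := hmix (M - m) hkk1 hkkN _ hC _ hB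
        have hmx' : (P ((⋂ k ∈ T', (A k)ᶜ) ∩ (A M)ᶜ)).toReal ≤
            (P (⋂ k ∈ T', (A k)ᶜ)).toReal * (P ((A M)ᶜ)).toReal + αs := by
          have := (abs_le.mp hmx).2
          linarith
        have ihC := ih T' hcard' hmem' hsep'
        have hPCnn : (0:ℝ) ≤ (P (⋂ k ∈ T', (A k)ᶜ)).toReal := ENNReal.toReal_nonneg
        have h1pM0 : (0:ℝ) ≤ 1 - p M := by have := hp1 M; linarith
        have hE' : (0:ℝ) ≤ Real.exp (-(∑ k ∈ T', p k)) := Real.exp_nonneg _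
        have hGn := hGnonneg n
        calc (P (⋂ k ∈ T, (A k)ᶜ)).toReal
            = (P ((⋂ k ∈ T', (A k)ᶜ) ∩ (A M)ᶜ)).toReal := by rw [hsplit]
          _ ≤ (P (⋂ k ∈ T', (A k)ᶜ)).toReal * (1 - p M) + αs := by
              rw [← hPM]; exact hmx'
          _ ≤ (Real.exp (-(∑ k ∈ T', p k)) + αs * ∑ t ∈ Finset.range n, r ^ t)
                * (1 - p M) + αs := by
              have := mul_le_mul_of_nonneg_right ihC h1pM0
              linarith
          _ ≤ Real.exp (-(∑ k ∈ T', p k)) * Real.exp (-(p M))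
                + αs * ((∑ t ∈ Finset.range n, r ^ t) * r) + αs := by
              have h1 := mul_le_mul_of_nonneg_left h1pM hE'
              have h2 := mul_le_mul_of_nonneg_left h1pMr
                (mul_nonneg hαs hGn)
              nlinarith [mul_le_mul_of_nonneg_left h1pMr (mul_nonneg hαs hGn)]
          _ = Real.exp (-(∑ k ∈ T, p k)) + αs * ∑ t ∈ Finset.range (n + 1), r ^ t := by
              rw [hsum, neg_add, Real.exp_add, geom_sum_succ]
              ring
  -- choose the best residue class
  have hmpos : 0 < m := by omega
  have hfib : ∑ j ∈ Finset.range m,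
      (∑ k ∈ (Finset.Icc 1 N).filter (fun k => k % m = j), p k)
      = ∑ k ∈ Finset.Icc 1 N, p k :=
    Finset.sum_fiberwise_of_maps_to (fun k _ => Finset.mem_range.mpr (Nat.mod_lt k hmpos)) p
  obtain ⟨j, hjmem, hjge⟩ : ∃ j ∈ Finset.range m,
      (∑ k ∈ Finset.Icc 1 N, p k) / (m : ℝ)
        ≤ ∑ k ∈ (Finset.Icc 1 N).filter (fun k => k % m = j), p k := by
    apply Finset.exists_le_of_sum_le (Finset.nonempty_range_iff.mpr (by omega))
    rw [hfib, Finset.sum_const, Finset.card_range, nsmul_eq_mul,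
      mul_div_cancel₀ _ (by exact_mod_cast hmpos.ne' : (m:ℝ) ≠ 0)]
  set T := (Finset.Icc 1 N).filter (fun k => k % m = j) with hTdef
  have hTmem : ∀ k ∈ T, 1 ≤ k ∧ k ≤ N := fun k hk =>
    Finset.mem_Icc.mp (Finset.mem_filter.mp hk).1
  have hTsep : ∀ a ∈ T, ∀ b ∈ T, a < b → a + m ≤ b := by
    intro a ha b hb hab
    have h1 : a % m = j := (Finset.mem_filter.mp ha).2
    have h2 : b % m = j := (Finset.mem_filter.mp hb).2
    have hmod : a ≡ b [MOD m] := h1.trans h2.symm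
    have hdvd : m ∣ b - a := (Nat.modEq_iff_dvd' hab.le).mp hmod
    have := Nat.le_of_dvd (by omega) hdvd
    omega
  have hkey := key T.card T le_rfl hTmem hTsep
  have hUmeas : MeasurableSet (⋃ k ∈ T, A k) :=
    MeasurableSet.biUnion T.countable_toSet fun k hk =>
      hAmeas k (hTmem k hk).1 (hTmem k hk).2
  have hcompl : (⋂ k ∈ T, (A k)ᶜ) = (⋃ k ∈ T, A k)ᶜ := by
    simp [Set.compl_iUnion]
  have hq : (P (⋂ k ∈ T, (A k)ᶜ)).toReal = 1 - (P (⋃ k ∈ T, A k)).toReal := by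
    rw [hcompl, prob_compl_eq_one_sub hUmeas,
      ENNReal.toReal_sub_of_le prob_le_one ENNReal.one_ne_top, ENNReal.toReal_one]
  have hmono : (P (⋃ k ∈ T, A k)).toReal ≤ (P (⋃ k ∈ Finset.Icc 1 N, A k)).toReal := by
    apply ENNReal.toReal_mono (measure_ne_top P _)
    apply measure_mono
    refine Set.iUnion₂_subset fun k hk => ?_
    exact Set.subset_iUnion₂ (s := fun k (_ : k ∈ Finset.Icc 1 N) => A k) k
      (Finset.mem_filter.mp hk).1
  have hexpS : Real.exp (-(∑ k ∈ T, p k))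
      ≤ Real.exp (-(∑ k ∈ Finset.Icc 1 N, p k) / ((L : ℝ) + 1)) := by
    apply Real.exp_le_exp.mpr
    have hcast : ((m : ℝ)) = (L : ℝ) + 1 := by push_cast [hm]; ring
    rw [neg_div, ← hcast]
    linarith
  have hGfin : αs * ∑ t ∈ Finset.range T.card, r ^ t ≤ αs / (1 - r) := by
    calc αs * ∑ t ∈ Finset.range T.card, r ^ t ≤ αs * (1 / (1 - r)) :=
          mul_le_mul_of_nonneg_left (hGle _) hαs
      _ = αs / (1 - r) := by rw [mul_one_div]
  linarith
end

section
/- Let (Ω, ℱ, P) be a probability space and let (A_k)_{k≥1} be a sequence of events. Let Φ : ℕ → ℕ be non-decreasing with ∑_{k=1}^{Φ(n)} P(A_k) ≥ n for every n ≥ 1. Let L ≥ 0 be an integer and let φ⋆ ≥ 0 be such that for every k ≥ 1, every event C in σ(A₁, …, A_k) with P(C) > 0, and every event B in σ(A_j : j ≥ k+L+1), one has |P(B ∣ C) − P(B)| ≤ φ⋆. Then for all integers n ≥ 1 and i ≥ 0, setting M_{i,n} := Φ(i+n) − i, one has P(⋃_{k=i+1}^{Φ(i+n)} A_k) ≥ 1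 − exp(−(1/(L+1)) (n − M_{i,n}·φ⋆)₊). -/
open MeasureTheory

lemma phi_chain_bound
    {Ω : Type*} [MeasurableSpace Ω] (P : Measure Ω) [IsProbabilityMeasure P]
    (A : ℕ → Set Ω) (hA : ∀ k, 1 ≤ k → MeasurableSet (A k))
    (L : ℕ) (φs : ℝ) (hφs : 0 ≤ φs)
    (hmix : ∀ k, 1 ≤ k →
      ∀ C : Set Ω,
        MeasurableSet[MeasurableSpace.generateFrom (A '' Set.Icc 1 k)] C → 0 < P C →
      ∀ B : Set Ω,
        MeasurableSet[MeasurableSpace.generateFrom (A '' Set.Ici (k + L + 1))] B →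
          |(P (B ∩ C)).toReal / (P C).toReal - (P B).toReal| ≤ φs) :
    ∀ T : Finset ℕ, (∀ k ∈ T, 1 ≤ k) → (∀ a ∈ T, ∀ b ∈ T, a < b → a + L + 1 ≤ b) →
      (P (⋂ k ∈ T, (A k)ᶜ)).toReal ≤ ∏ k ∈ T, (1 - (P (A k)).toReal + φs) := by
  intro T
  induction T using Finset.strongInductionOn with
  | _ T ih =>
    intro h1 hsep
    rcases T.eq_empty_or_nonempty with rfl | hne
    · simp
    · set m := T.max' hne with hm
      have hmmem : m ∈ T := T.max'_mem hne
      have hm1 : 1 ≤ m := h1 m hmmem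
      have hT : T = insert m (T.erase m) := (Finset.insert_erase hmmem).symm
      have hcompl : (P ((A m)ᶜ)).toReal = 1 - (P (A m)).toReal := by
        rw [prob_compl_eq_one_sub (hA m hm1)]
        rw [ENNReal.toReal_sub_of_le prob_le_one ENNReal.one_ne_top, ENNReal.toReal_one]
      have hfac : (0:ℝ) ≤ 1 - (P (A m)).toReal + φs := by
        have : (P (A m)).toReal ≤ 1 := by
          simpa using ENNReal.toReal_mono ENNReal.one_ne_top (prob_le_one (μ := P) (s := A m))
        linarith
      rcases (T.erase m).eq_empty_or_nonempty with he | hne'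
      · have hTs : T = {m} := by rw [hT, he]; rfl
        rw [hTs]
        simp only [Finset.mem_singleton, Set.iInter_iInter_eq_left, Finset.prod_singleton]
        calc (P ((A m)ᶜ)).toReal = 1 - (P (A m)).toReal := hcompl
        _ ≤ 1 - (P (A m)).toReal + φs := by linarith
      · -- nonempty erase
        set k0 := (T.erase m).max' hne' with hk0
        have hk0mem' : k0 ∈ T.erase m := (T.erase m).max'_mem hne'
        have hk0mem : k0 ∈ T := Finset.mem_of_mem_erase hk0mem'
        have hk01 : 1 ≤ k0 := h1 k0 hk0mem
        have hk0lt : k0 < m := lt_of_le_of_ne (T.le_max' k0 hk0mem)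
          (Finset.ne_of_mem_erase hk0mem')
        have hgap : k0 + L + 1 ≤ m := hsep k0 hk0mem m hmmem hk0lt
        set C := ⋂ k ∈ T.erase m, (A k)ᶜ with hC
        have hCmeas : MeasurableSet[MeasurableSpace.generateFrom (A '' Set.Icc 1 k0)] C := by
          apply MeasurableSet.biInter (T.erase m).countable_toSet
          intro b hb
          have hbmem : A b ∈ A '' Set.Icc 1 k0 :=
            Set.mem_image_of_mem A ⟨h1 b (Finset.mem_of_mem_erase hb), (T.erase m).le_max' b hb⟩
          exact (MeasurableSpace.measurableSet_generateFrom hbmem).compl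
        have hCm : MeasurableSet C := by
          apply MeasurableSet.biInter (T.erase m).countable_toSet
          intro b hb
          exact (hA b (h1 b (Finset.mem_of_mem_erase hb))).compl
        have hBmeas : MeasurableSet[MeasurableSpace.generateFrom
            (A '' Set.Ici (k0 + L + 1))] ((A m)ᶜ) :=
          (MeasurableSpace.measurableSet_generateFrom
            (Set.mem_image_of_mem A (Set.mem_Ici.mpr hgap))).compl
        have hsplit : (⋂ k ∈ T, (A k)ᶜ) = (A m)ᶜ ∩ C := by
          rw [hT]; exact Finset.set_biInter_insert _ _ _
        have hIH : (P C).toReal ≤ ∏ k ∈ T.erase m, (1 - (P (A k)).toReal + φs) :=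
          ih (T.erase m) (Finset.erase_ssubset hmmem)
            (fun k hk => h1 k (Finset.mem_of_mem_erase hk))
            (fun a ha b hb hab => hsep a (Finset.mem_of_mem_erase ha)
              b (Finset.mem_of_mem_erase hb) hab)
        have hstep : (P ((A m)ᶜ ∩ C)).toReal ≤ (1 - (P (A m)).toReal + φs) * (P C).toReal := by
          rcases eq_or_lt_of_le (zero_le : 0 ≤ P C) with h0 | hpos
          · have : P ((A m)ᶜ ∩ C) = 0 :=
              le_antisymm (le_trans (measure_mono Set.inter_subset_right) h0.symm.le) zero_le
            rw [this]
            simp only [ENNReal.toReal_zero]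
            exact mul_nonneg hfac ENNReal.toReal_nonneg
          · have habs := hmix k0 hk01 C hCmeas hpos ((A m)ᶜ) hBmeas
            have hPCpos : 0 < (P C).toReal :=
              ENNReal.toReal_pos hpos.ne' (measure_ne_top _ _)
            have h2 := (abs_le.mp habs).2
            rw [hcompl] at h2
            have := (div_le_iff₀ hPCpos).mp (by linarith : (P ((A m)ᶜ ∩ C)).toReal / (P C).toReal
              ≤ 1 - (P (A m)).toReal + φs)
            linarith
        calc (P (⋂ k ∈ T, (A k)ᶜ)).toReal = (P ((A m)ᶜ ∩ C)).toReal := by rw [hsplit]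
        _ ≤ (1 - (P (A m)).toReal + φs) * (P C).toReal := hstep
        _ ≤ (1 - (P (A m)).toReal + φs) * ∏ k ∈ T.erase m, (1 - (P (A k)).toReal + φs) := by
            exact mul_le_mul_of_nonneg_left hIH hfac
        _ = ∏ k ∈ T, (1 - (P (A k)).toReal + φs) :=
            Finset.mul_prod_erase T (fun k => 1 - (P (A k)).toReal + φs) hmmem

/-- Corollary (finite-window rate form, φ-mixing case): if `Φ` is non-decreasing with
`∑_{k=1}^{Φ n} P(A k) ≥ n` for all `n ≥ 1` and the sequence is φ-mixing at lag `L + 1`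
with coefficient at most `φs`, then for `n ≥ 1`, `i ≥ 0`, with `M = Φ(i+n) − i`,
`P(⋃_{k=i+1}^{Φ(i+n)} A k) ≥ 1 − exp(−(1/(L+1))(n − M·φs)₊)`. -/
theorem phi_mixing_window_bound
    {Ω : Type*} [MeasurableSpace Ω] (P : Measure Ω) [IsProbabilityMeasure P]
    (A : ℕ → Set Ω) (hA : ∀ k, 1 ≤ k → MeasurableSet (A k))
    (Φ : ℕ → ℕ) (hΦ : Monotone Φ)
    (hmass : ∀ n : ℕ, 1 ≤ n → (n : ℝ) ≤ ∑ k ∈ Finset.Icc 1 (Φ n), (P (A k)).toReal)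
    (L : ℕ) (φs : ℝ) (hφs : 0 ≤ φs)
    (hmix : ∀ k, 1 ≤ k →
      ∀ C : Set Ω,
        MeasurableSet[MeasurableSpace.generateFrom (A '' Set.Icc 1 k)] C → 0 < P C →
      ∀ B : Set Ω,
        MeasurableSet[MeasurableSpace.generateFrom (A '' Set.Ici (k + L + 1))] B →
          |(P (B ∩ C)).toReal / (P C).toReal - (P B).toReal| ≤ φs) :
    ∀ n : ℕ, 1 ≤ n → ∀ i : ℕ,
      1 - Real.exp (-(1 / ((L : ℝ) + 1)) *
          max ((n : ℝ) - ((Φ (i + n) - i : ℕ) : ℝ) * φs) 0) ≤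
        (P (⋃ k ∈ Finset.Icc (i + 1) (Φ (i + n)), A k)).toReal := by
  intro n hn i
  set N := Φ (i + n) with hN
  set p : ℕ → ℝ := fun k => (P (A k)).toReal with hp
  have hp0 : ∀ k, 0 ≤ p k := fun k => ENNReal.toReal_nonneg
  have hp1 : ∀ k, p k ≤ 1 := by
    intro k
    simpa [hp] using ENNReal.toReal_mono ENNReal.one_ne_top (prob_le_one (μ := P) (s := A k))
  have hmass' : ((i + n : ℕ) : ℝ) ≤ ∑ k ∈ Finset.Icc 1 N, p k := hmass (i + n) (by omega)
  have hsumle : ∀ s : Finset ℕ, ∑ k ∈ s, p k ≤ (s.card : ℝ) := by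
    intro s
    calc ∑ k ∈ s, p k ≤ ∑ k ∈ s, (1 : ℝ) := Finset.sum_le_sum (fun k _ => hp1 k)
    _ = (s.card : ℝ) := by simp
  have hNge : i + n ≤ N := by
    have := le_trans hmass' (hsumle (Finset.Icc 1 N))
    have hcard : (Finset.Icc 1 N).card = N := by simp
    rw [hcard] at this
    exact_mod_cast this
  have hiN : i ≤ N := le_trans (Nat.le_add_right i n) hNge
  set S := Finset.Icc (i + 1) N with hS
  have hScard : S.card = N - i := by simp [hS]
  -- sum over S is at least n
  have hsplit : ∑ k ∈ Finset.Icc 1 i, p k + ∑ k ∈ S, p k = ∑ k ∈ Finset.Icc 1 N, p k := by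
    rw [hS]
    rw [show Finset.Icc 1 i = Finset.Ioc 0 i by rfl,
        show Finset.Icc (i+1) N = Finset.Ioc i N by exact (Finset.Icc_add_one_left_eq_Ioc i N),
        show Finset.Icc 1 N = Finset.Ioc 0 N by rfl]
    exact Finset.sum_Ioc_consecutive _ (Nat.zero_le i) hiN
  have hSsum : (n : ℝ) ≤ ∑ k ∈ S, p k := by
    have h1 : ∑ k ∈ Finset.Icc 1 i, p k ≤ (i : ℝ) := by
      simpa using hsumle (Finset.Icc 1 i)
    have : ((i : ℝ) + n) ≤ ∑ k ∈ Finset.Icc 1 N, p k := by push_cast at hmass'; linarith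
    linarith [hsplit]
  -- abbreviation for the quantity c
  set c : ℝ := (n : ℝ) - ((N - i : ℕ) : ℝ) * φs with hc
  rcases le_or_gt c 0 with hc0 | hc0
  · rw [max_eq_right hc0]
    simp only [mul_zero, Real.exp_zero, sub_self]
    exact ENNReal.toReal_nonneg
  · rw [max_eq_left hc0.le]
    have hcast : ((N - i : ℕ) : ℝ) = (N : ℝ) - i := by
      rw [Nat.cast_sub hiN]
    -- residue classes
    have hfib : ∑ r ∈ Finset.range (L + 1), ∑ k ∈ S.filter (fun k => k % (L+1) = r),
        (p k - φs) = ∑ k ∈ S, (p k - φs) := by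
      apply Finset.sum_fiberwise_of_maps_to
      intro k _
      exact Finset.mem_range.mpr (Nat.mod_lt _ (Nat.succ_pos L))
    have hStot : c ≤ ∑ k ∈ S, (p k - φs) := by
      rw [Finset.sum_sub_distrib, Finset.sum_const, nsmul_eq_mul, hScard]
      have : ((N - i : ℕ) : ℝ) * φs ≤ ((N - i : ℕ) : ℝ) * φs := le_refl _
      rw [hc]
      linarith [hSsum]
    obtain ⟨r, hr, hrge⟩ : ∃ r ∈ Finset.range (L + 1),
        c / ((L : ℝ) + 1) ≤ ∑ k ∈ S.filter (fun k => k % (L+1) = r), (p k - φs) := by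
      apply Finset.exists_le_of_sum_le ⟨0, Finset.mem_range.mpr (Nat.succ_pos L)⟩
      rw [Finset.sum_const, nsmul_eq_mul, Finset.card_range, hfib]
      have hL1 : (0:ℝ) < (L : ℝ) + 1 := by positivity
      rw [show ((L+1 : ℕ) : ℝ) = (L : ℝ) + 1 by push_cast; ring,
        mul_div_cancel₀ c hL1.ne']
      exact hStot
    set T := S.filter (fun k => k % (L+1) = r) with hT
    have hT1 : ∀ k ∈ T, 1 ≤ k := by
      intro k hk
      have := (Finset.mem_Icc.mp (Finset.mem_filter.mp hk).1).1
      omega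
    have hTsep : ∀ a ∈ T, ∀ b ∈ T, a < b → a + L + 1 ≤ b := by
      intro a ha b hb hab
      have ha' := (Finset.mem_filter.mp ha).2
      have hb' := (Finset.mem_filter.mp hb).2
      have hmod : a % (L+1) = b % (L+1) := by rw [ha', hb']
      have hdvd : (L+1) ∣ (b - a) := (Nat.modEq_iff_dvd' hab.le).mp hmod
      have := Nat.le_of_dvd (by omega) hdvd
      omega
    have hchain := phi_chain_bound P A hA L φs hφs hmix T hT1 hTsep
    -- product ≤ exp
    have hprodexp : ∏ k ∈ T, (1 - p k + φs) ≤ Real.exp (-∑ k ∈ T, (p k - φs)) := by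
      have h1 : ∏ k ∈ T, (1 - p k + φs) ≤ ∏ k ∈ T, Real.exp (-(p k - φs)) := by
        apply Finset.prod_le_prod
        · intro k _
          have := hp1 k
          linarith
        · intro k _
          have := Real.add_one_le_exp (-(p k - φs))
          linarith
      have h2 : ∏ k ∈ T, Real.exp (-(p k - φs)) = Real.exp (-∑ k ∈ T, (p k - φs)) := by
        rw [← Real.exp_sum, ← Finset.sum_neg_distrib]
      linarith
    -- conclude
    set U := ⋃ k ∈ S, A k with hU
    have hUm : MeasurableSet U :=
      S.measurableSet_biUnion (fun k hk => hA k (by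
        have := (Finset.mem_Icc.mp hk).1; omega))
    have hUc : Uᶜ = ⋂ k ∈ S, (A k)ᶜ := by
      rw [hU, Set.compl_iUnion₂]
    have hsub : Uᶜ ⊆ ⋂ k ∈ T, (A k)ᶜ := by
      rw [hUc]
      exact Set.biInter_mono (by exact_mod_cast Finset.filter_subset _ S) (fun k _ => le_refl _)
    have hPUc : (P Uᶜ).toReal = 1 - (P U).toReal := by
      rw [prob_compl_eq_one_sub hUm,
        ENNReal.toReal_sub_of_le prob_le_one ENNReal.one_ne_top, ENNReal.toReal_one]
    have hfin : (P Uᶜ).toReal ≤ Real.exp (-(1 / ((L : ℝ) + 1)) * c) := by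
      have e1 : (P Uᶜ).toReal ≤ (P (⋂ k ∈ T, (A k)ᶜ)).toReal :=
        ENNReal.toReal_mono (measure_ne_top _ _) (measure_mono hsub)
      have e2 : Real.exp (-∑ k ∈ T, (p k - φs)) ≤ Real.exp (-(1 / ((L : ℝ) + 1)) * c) := by
        apply Real.exp_le_exp.mpr
        have : -(1 / ((L : ℝ) + 1)) * c = -(c / ((L : ℝ) + 1)) := by ring
        rw [this]
        linarith [hrge]
      calc (P Uᶜ).toReal ≤ (P (⋂ k ∈ T, (A k)ᶜ)).toReal := e1
      _ ≤ ∏ k ∈ T, (1 - p k + φs) := hchain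
      _ ≤ Real.exp (-∑ k ∈ T, (p k - φs)) := hprodexp
      _ ≤ Real.exp (-(1 / ((L : ℝ) + 1)) * c) := e2
    linarith [hPUc, hfin]
end

section
/- Let (Ω, ℱ, P) be a probability space, let N ≥ 1, let A₁, …, A_N be events, and let L ≥ 2 be an integer. Let φ⋆ ≥ 0 and suppose that for every k with 1 ≤ k and k + L + 1 ≤ N, every event C in σ(A₁, …, A_k) with P(C) > 0, and every event B in σ(A_{k+L+1}, …, A_N), one has |P(B ∣ C) − P(B)| ≤ φ⋆. Set S_N := ∑_{k=1}^N P(A_k), T^w_{L−1} := ∑_{1≤i<k≤N, k−i ≤ L−1} ((L − (k−i))/L)·P(A_i ∩ A_k), and κ_{N,L} := ⌈N/L⌉ + 1. Then P(⋃_{k=1}^N A_k) ≥ 1 − exp(−(1/2)(S_N − T^w_{L−1} − κ_{N,L}·φ⋆)₊). -/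
open MeasureTheory

section PhiMixingAux
open Finset

def Bset (N L s j : ℕ) : Finset ℕ :=
  (Finset.Icc 1 N).filter (fun k => (k + s - 1) / L = j)

lemma mem_Bset {N L s j k : ℕ} :
    k ∈ Bset N L s j ↔ (1 ≤ k ∧ k ≤ N) ∧ (k + s - 1) / L = j := by
  simp [Bset, Finset.mem_filter, Finset.mem_Icc]

-- characterization: k ∈ Bset → L*j ≤ k+s-1 < L*j + L
lemma Bset_char {N L s j k : ℕ} (hL : 0 < L) (h : k ∈ Bset N L s j) :
    1 ≤ k ∧ k ≤ N ∧ L * j ≤ k + s - 1 ∧ k + s - 1 < L * j + L := by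
  rw [mem_Bset] at h
  obtain ⟨⟨h1, h2⟩, h3⟩ := h
  have hdm := Nat.div_add_mod (k + s - 1) L
  have hml := Nat.mod_lt (k + s - 1) hL
  rw [h3] at hdm
  omega

lemma bonferroni {Ω : Type*} [MeasurableSpace Ω] (P : Measure Ω) [IsFiniteMeasure P]
    (A : ℕ → Set Ω) (F : Finset ℕ) (hA : ∀ k ∈ F, MeasurableSet (A k)) :
    (∑ k ∈ F, (P (A k)).toReal)
      - ∑ i ∈ F, ∑ k ∈ F, (if i < k then (P (A i ∩ A k)).toReal else 0)
      ≤ (P (⋃ k ∈ F, A k)).toReal := by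
  induction F using Finset.induction_on with
  | empty => simp
  | @insert a F ha IH =>
    have hAF : ∀ k ∈ F, MeasurableSet (A k) := fun k hk => hA k (Finset.mem_insert_of_mem hk)
    have hAa : MeasurableSet (A a) := hA a (Finset.mem_insert_self a F)
    have hIH := IH hAF
    set U : Set Ω := ⋃ k ∈ F, A k with hU
    have hUm : MeasurableSet U := F.measurableSet_biUnion hAF
    have hsplit : ∀ i ∈ F,
        ((if a < i then (P (A a ∩ A i)).toReal else 0)
          + (if i < a then (P (A i ∩ A a)).toReal else 0)) = (P (A i ∩ A a)).toReal := by
      intro i hiF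
      have hne : i ≠ a := fun h => ha (h ▸ hiF)
      rcases lt_or_gt_of_ne hne with h | h
      · rw [if_neg (by omega), if_pos h]; ring
      · rw [if_pos h, if_neg (by omega), Set.inter_comm]; ring
    have hcap : (P (A a ∩ U)).toReal ≤ ∑ i ∈ F, (P (A i ∩ A a)).toReal := by
      have h1 : A a ∩ U = ⋃ i ∈ F, (A a ∩ A i) := by
        rw [hU, Set.inter_iUnion₂]
      have h2 : P (A a ∩ U) ≤ ∑ i ∈ F, P (A a ∩ A i) := by
        rw [h1]; exact measure_biUnion_finset_le F _
      calc (P (A a ∩ U)).toReal ≤ (∑ i ∈ F, P (A a ∩ A i)).toReal := by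
              refine ENNReal.toReal_mono ?_ h2
              exact (ENNReal.sum_lt_top.mpr (fun i _ => measure_lt_top _ _)).ne
        _ = ∑ i ∈ F, (P (A a ∩ A i)).toReal := ENNReal.toReal_sum (fun i _ => measure_ne_top _ _)
        _ = ∑ i ∈ F, (P (A i ∩ A a)).toReal := by
              refine Finset.sum_congr rfl fun i _ => by rw [Set.inter_comm]
    have hunion : (P (⋃ k ∈ insert a F, A k)).toReal
        = (P (A a)).toReal + (P U).toReal - (P (A a ∩ U)).toReal := by
      have h1 : (⋃ k ∈ insert a F, A k) = A a ∪ U := by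
        rw [hU]; exact Set.biUnion_insert a (F : Set ℕ) (fun k => A k) ▸ by
          simp [Set.biUnion_insert]
      have h2 : (P (A a ∪ U)).toReal + (P (A a ∩ U)).toReal
          = (P (A a)).toReal + (P U).toReal := by
        rw [← ENNReal.toReal_add (measure_ne_top _ _) (measure_ne_top _ _),
            ← ENNReal.toReal_add (measure_ne_top _ _) (measure_ne_top _ _),
            measure_union_add_inter (A a) hUm]
      rw [h1]; linarith
    have hdouble : ∑ i ∈ insert a F, ∑ k ∈ insert a F, (if i < k then (P (A i ∩ A k)).toReal else 0)
        = (∑ i ∈ F, (P (A i ∩ A a)).toReal)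
          + ∑ i ∈ F, ∑ k ∈ F, (if i < k then (P (A i ∩ A k)).toReal else 0) := by
      rw [Finset.sum_insert ha]
      rw [Finset.sum_insert ha]
      rw [if_neg (lt_irrefl a)]
      have : ∀ i ∈ F, (∑ k ∈ insert a F, (if i < k then (P (A i ∩ A k)).toReal else 0))
          = (if i < a then (P (A i ∩ A a)).toReal else 0)
            + ∑ k ∈ F, (if i < k then (P (A i ∩ A k)).toReal else 0) := by
        intro i _; rw [Finset.sum_insert ha]
      rw [Finset.sum_congr rfl this, Finset.sum_add_distrib]
      have hs2 : (∑ k ∈ F, (if a < k then (P (A a ∩ A k)).toReal else 0))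
          + ∑ i ∈ F, (if i < a then (P (A i ∩ A a)).toReal else 0)
          = ∑ i ∈ F, (P (A i ∩ A a)).toReal := by
        rw [← Finset.sum_add_distrib]
        exact Finset.sum_congr rfl hsplit
      linarith
    rw [Finset.sum_insert ha, hdouble, hunion]
    have hcapnn : (0:ℝ) ≤ (P (A a ∩ U)).toReal := ENNReal.toReal_nonneg
    linarith

lemma toReal_compl {Ω : Type*} [MeasurableSpace Ω] (P : Measure Ω) [IsProbabilityMeasure P]
    {t : Set Ω} (ht : MeasurableSet t) : (P tᶜ).toReal = 1 - (P t).toReal := by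
  rw [measure_compl ht (measure_ne_top _ _), measure_univ,
    ENNReal.toReal_sub_of_le prob_le_one ENNReal.one_ne_top, ENNReal.toReal_one]

lemma chainLemma {Ω : Type*} [MeasurableSpace Ω] (P : Measure Ω) [IsProbabilityMeasure P]
    (N : ℕ) (A : ℕ → Set Ω) (hA : ∀ k ∈ Finset.Icc 1 N, MeasurableSet (A k))
    (L : ℕ) (hL : 2 ≤ L) (φs : ℝ) (hφs : 0 ≤ φs)
    (hmix : ∀ k, 1 ≤ k → k + L + 1 ≤ N →
      ∀ C : Set Ω,
        MeasurableSet[MeasurableSpace.generateFrom (A '' Set.Icc 1 k)] C → 0 < P C →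
      ∀ B : Set Ω,
        MeasurableSet[MeasurableSpace.generateFrom (A '' Set.Icc (k + L + 1) N)] B →
          |(P (B ∩ C)).toReal / (P C).toReal - (P B).toReal| ≤ φs)
    (s : ℕ) (hs : s < L) (F : Finset ℕ)
    (hgap : ∀ a ∈ F, ∀ b ∈ F, a < b → a + 2 ≤ b) :
    (P (⋂ j ∈ F, (⋃ k ∈ Bset N L s j, A k)ᶜ)).toReal ≤
      Real.exp (∑ j ∈ F,
        (φs - ((∑ k ∈ Bset N L s j, (P (A k)).toReal)
          - ∑ i ∈ Bset N L s j, ∑ k ∈ Bset N L s j,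
              (if i < k then (P (A i ∩ A k)).toReal else 0)))) := by
  have hL0 : 0 < L := by omega
  have hAB : ∀ j, ∀ k ∈ Bset N L s j, MeasurableSet (A k) := by
    intro j k hk
    exact hA k (Finset.mem_Icc.mpr ⟨(mem_Bset.mp hk).1.1, (mem_Bset.mp hk).1.2⟩)
  have measD : ∀ j, MeasurableSet (⋃ k ∈ Bset N L s j, A k) :=
    fun j => (Bset N L s j).measurableSet_biUnion (hAB j)
  induction F using Finset.induction_on_max with
  | empty => simp
  | insert a F hmax IH =>
    have haF : a ∉ F := fun h => lt_irrefl a (hmax a h)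
    have hgapF : ∀ x ∈ F, ∀ y ∈ F, x < y → x + 2 ≤ y := fun x hx y hy hxy =>
      hgap x (Finset.mem_insert_of_mem hx) y (Finset.mem_insert_of_mem hy) hxy
    have hba : ∀ b ∈ F, b + 2 ≤ a := fun b hb =>
      hgap b (Finset.mem_insert_of_mem hb) a (Finset.mem_insert_self a F) (hmax b hb)
    have hIH := IH hgapF
    have hsetins : (⋂ j ∈ insert a F, (⋃ k ∈ Bset N L s j, A k)ᶜ)
        = (⋃ k ∈ Bset N L s a, A k)ᶜ ∩ (⋂ j ∈ F, (⋃ k ∈ Bset N L s j, A k)ᶜ) := by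
      simp [Finset.set_biInter_insert]
    rw [hsetins, Finset.sum_insert haF, Real.exp_add]
    set Da : Set Ω := ⋃ k ∈ Bset N L s a, A k with hDa
    set C : Set Ω := ⋂ j ∈ F, (⋃ k ∈ Bset N L s j, A k)ᶜ with hC
    set uA : ℝ := (∑ k ∈ Bset N L s a, (P (A k)).toReal) -
        ∑ i ∈ Bset N L s a, ∑ k ∈ Bset N L s a, (if i < k then (P (A i ∩ A k)).toReal else 0)
      with huA
    set SF : ℝ := ∑ j ∈ F,
        (φs - ((∑ k ∈ Bset N L s j, (P (A k)).toReal)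
          - ∑ i ∈ Bset N L s j, ∑ k ∈ Bset N L s j,
              (if i < k then (P (A i ∩ A k)).toReal else 0))) with hSF
    have measC : MeasurableSet C := F.measurableSet_biInter (fun j _ => (measD j).compl)
    have measDa : MeasurableSet Da := measD a
    have hbon : uA ≤ (P Da).toReal := bonferroni P A (Bset N L s a) (hAB a)
    have hpa1 : (P Da).toReal ≤ 1 := by
      have h := ENNReal.toReal_mono ENNReal.one_ne_top (prob_le_one (μ := P) (s := Da))
      simpa using h
    have hexpSF : (0:ℝ) < Real.exp SF := Real.exp_pos _
    by_cases hBa : Bset N L s a = ∅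
    · have hDae : Da = ∅ := by rw [hDa, hBa]; simp
      have huA0 : uA = 0 := by rw [huA, hBa]; simp
      rw [hDae, huA0]
      simp only [Set.compl_empty, Set.univ_inter, sub_zero]
      have h1 : (1:ℝ) ≤ Real.exp φs := by
        have := Real.add_one_le_exp φs; linarith
      calc (P C).toReal ≤ Real.exp SF := hIH
        _ ≤ Real.exp φs * Real.exp SF := le_mul_of_one_le_left hexpSF.le h1
    · have hane : (Bset N L s a).Nonempty := Finset.nonempty_iff_ne_empty.mpr hBa
      by_cases hF : F = ∅
      · have hCuniv : C = Set.univ := by rw [hC, hF]; simp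
        have hSF0 : SF = 0 := by rw [hSF, hF]; simp
        rw [hCuniv, Set.inter_univ, hSF0, Real.exp_zero, mul_one,
          toReal_compl P measDa]
        have h3 := Real.add_one_le_exp (φs - uA)
        linarith
      · obtain ⟨b, hbF⟩ := Finset.nonempty_iff_ne_empty.mpr hF
        have ha2 : 2 ≤ a := by have := hba b hbF; omega
        by_cases hPC : P C = 0
        · have hz : P (Daᶜ ∩ C) = 0 :=
            le_antisymm (hPC ▸ measure_mono Set.inter_subset_right) zero_le
          rw [hz]
          simp only [ENNReal.toReal_zero]
          positivity
        · have hPCpos : 0 < P C := pos_iff_ne_zero.mpr hPC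
          obtain ⟨k0, hk0⟩ := hane
          obtain ⟨Y, hY⟩ : ∃ Y, L * (a - 1) = Y := ⟨_, rfl⟩
          have hLY : L ≤ Y := by
            rw [← hY]; exact Nat.le_mul_of_pos_right L (by omega)
          set e : ℕ := Y - s with he
          have hLa : L * a = Y + L := by
            rw [← hY, ← Nat.mul_succ]
            congr 1
            omega
          have hBlow : ∀ k ∈ Bset N L s a, e + L + 1 ≤ k := by
            intro k hk
            obtain ⟨h1, h2, h3, h4⟩ := Bset_char hL0 hk
            rw [hLa] at h3
            omega
          have he1 : 1 ≤ e := by omega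
          have heN : e + L + 1 ≤ N :=
            le_trans (hBlow k0 hk0) (Bset_char hL0 hk0).2.1
          have hFhigh : ∀ j ∈ F, ∀ k ∈ Bset N L s j, k ∈ Set.Icc 1 e := by
            intro j hj k hk
            obtain ⟨h1, h2, h3, h4⟩ := Bset_char hL0 hk
            have h5 : L * j + L ≤ Y := by
              rw [← hY]
              have h6 : L * j ≤ L * (a - 2) := Nat.mul_le_mul_left L (by
                have := hba j hj; omega)
              have h7 : L * (a - 1) = L * (a - 2) + L := by
                rw [← Nat.mul_succ]
                congr 1
                omega
              omega
            have h6 : k + s - 1 < Y := lt_of_lt_of_le h4 h5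
            exact Set.mem_Icc.mpr ⟨h1, by omega⟩
          have hCmeasG : MeasurableSet[MeasurableSpace.generateFrom (A '' Set.Icc 1 e)] C := by
            refine F.measurableSet_biInter (fun j hj => MeasurableSet.compl ?_)
            refine (Bset N L s j).measurableSet_biUnion (fun k hk => ?_)
            exact MeasurableSpace.measurableSet_generateFrom ⟨k, hFhigh j hj k hk, rfl⟩
          have hBmeasG : MeasurableSet[MeasurableSpace.generateFrom
              (A '' Set.Icc (e + L + 1) N)] Da := by
            refine (Bset N L s a).measurableSet_biUnion (fun k hk => ?_)
            exact MeasurableSpace.measurableSet_generateFrom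
              ⟨k, Set.mem_Icc.mpr ⟨hBlow k hk, (Bset_char hL0 hk).2.1⟩, rfl⟩
          have habs := hmix e he1 heN C hCmeasG hPCpos Da hBmeasG
          have hc0 : 0 < (P C).toReal := ENNReal.toReal_pos hPC (measure_ne_top _ _)
          have hkey : ((P Da).toReal - φs) * (P C).toReal ≤ (P (Da ∩ C)).toReal := by
            have h1 := (abs_le.mp habs).1
            have h2 : (P Da).toReal - φs ≤ (P (Da ∩ C)).toReal / (P C).toReal := by linarith
            calc ((P Da).toReal - φs) * (P C).toReal
                ≤ ((P (Da ∩ C)).toReal / (P C).toReal) * (P C).toReal :=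
                  mul_le_mul_of_nonneg_right h2 hc0.le
              _ = (P (Da ∩ C)).toReal := div_mul_cancel₀ _ (ne_of_gt hc0)
          have hdiff : (P (Daᶜ ∩ C)).toReal = (P C).toReal - (P (Da ∩ C)).toReal := by
            have hss : Daᶜ ∩ C = C \ (Da ∩ C) := by
              ext x; simp only [Set.mem_inter_iff, Set.mem_compl_iff, Set.mem_diff]; tauto
            rw [hss, measure_diff Set.inter_subset_right
                ((measDa.inter measC).nullMeasurableSet) (measure_ne_top _ _),
              ENNReal.toReal_sub_of_le (measure_mono Set.inter_subset_right)
                (measure_ne_top _ _)]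
          rw [hdiff]
          have h5 : (1 - uA + φs) ≤ Real.exp (φs - uA) := by
            have := Real.add_one_le_exp (φs - uA); linarith
          have h6 : (0:ℝ) ≤ 1 - uA + φs := by linarith
          calc (P C).toReal - (P (Da ∩ C)).toReal
              ≤ (P C).toReal - ((P Da).toReal - φs) * (P C).toReal := by linarith
            _ = (P C).toReal * (1 - (P Da).toReal + φs) := by ring
            _ ≤ (P C).toReal * (1 - uA + φs) :=
                mul_le_mul_of_nonneg_left (by linarith) hc0.le
            _ ≤ Real.exp SF * (1 - uA + φs) := mul_le_mul_of_nonneg_right hIH h6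
            _ ≤ Real.exp SF * Real.exp (φs - uA) :=
                mul_le_mul_of_nonneg_left h5 hexpSF.le
            _ = Real.exp (φs - uA) * Real.exp SF := mul_comm _ _

lemma same_block_mod {L a d : ℕ} (hL : 0 < L) (h : a / L = (a + d) / L) :
    a % L + d < L := by
  have h1 := Nat.div_add_mod a L
  have h2 := Nat.div_add_mod (a + d) L
  have h3 := Nat.mod_lt (a + d) hL
  have h4 := Nat.mod_lt a hL
  rw [← h] at h2
  obtain ⟨t, ht⟩ : ∃ t, L * (a / L) = t := ⟨_, rfl⟩
  rw [ht] at h1 h2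
  omega

lemma dist_of_same_block {L s i k : ℕ} (hL : 0 < L) (hi : 1 ≤ i) (hik : i < k)
    (h : (i + s - 1) / L = (k + s - 1) / L) : k - i ≤ L - 1 := by
  have ha : i + s - 1 = i - 1 + s := by omega
  have hb : k + s - 1 = (i - 1 + s) + (k - i) := by omega
  rw [ha, hb] at h
  have := same_block_mod hL h
  omega

lemma count_same_block {L i d : ℕ} (hL : 0 < L) (hi : 1 ≤ i) (hd : 1 ≤ d) :
    ((Finset.range L).filter (fun s => (i + s - 1) / L = (i + d + s - 1) / L)).card
      ≤ L - d := by
  classical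
  have key : ∀ x ∈ (Finset.range L).filter
      (fun s => (i + s - 1) / L = (i + d + s - 1) / L),
      (i - 1 + x) % L ∈ Finset.range (L - d) := by
    intro x hx
    obtain ⟨hxr, hcond⟩ := Finset.mem_filter.mp hx
    have ha : i + x - 1 = i - 1 + x := by omega
    have hb : i + d + x - 1 = (i - 1 + x) + d := by omega
    rw [ha, hb] at hcond
    have := same_block_mod hL hcond
    exact Finset.mem_range.mpr (by omega)
  have hinj : ∀ x ∈ (Finset.range L).filter
      (fun s => (i + s - 1) / L = (i + d + s - 1) / L),
      ∀ y ∈ (Finset.range L).filter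
      (fun s => (i + s - 1) / L = (i + d + s - 1) / L),
      (i - 1 + x) % L = (i - 1 + y) % L → x = y := by
    intro x hx y hy hxy
    have hxr := Finset.mem_range.mp (Finset.mem_filter.mp hx).1
    have hyr := Finset.mem_range.mp (Finset.mem_filter.mp hy).1
    rcases le_total x y with hle | hle
    · have hmod : Nat.ModEq L (i - 1 + x) (i - 1 + y) := hxy
      have hdvd := (Nat.modEq_iff_dvd' (by omega)).mp hmod
      have : i - 1 + y - (i - 1 + x) = y - x := by omega
      rw [this] at hdvd
      have := Nat.eq_zero_of_dvd_of_lt hdvd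
      omega
    · have hmod : Nat.ModEq L (i - 1 + y) (i - 1 + x) := hxy.symm
      have hdvd := (Nat.modEq_iff_dvd' (by omega)).mp hmod
      have : i - 1 + x - (i - 1 + y) = x - y := by omega
      rw [this] at hdvd
      have := Nat.eq_zero_of_dvd_of_lt hdvd
      omega
  have := Finset.card_le_card_of_injOn (fun s => (i - 1 + s) % L) key hinj
  simpa using this

lemma shift_bound {Ω : Type*} [MeasurableSpace Ω] (P : Measure Ω) [IsProbabilityMeasure P]
    (N : ℕ) (A : ℕ → Set Ω) (hA : ∀ k ∈ Finset.Icc 1 N, MeasurableSet (A k))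
    (L : ℕ) (hL : 2 ≤ L) (φs : ℝ) (hφs : 0 ≤ φs)
    (hmix : ∀ k, 1 ≤ k → k + L + 1 ≤ N →
      ∀ C : Set Ω,
        MeasurableSet[MeasurableSpace.generateFrom (A '' Set.Icc 1 k)] C → 0 < P C →
      ∀ B : Set Ω,
        MeasurableSet[MeasurableSpace.generateFrom (A '' Set.Icc (k + L + 1) N)] B →
          |(P (B ∩ C)).toReal / (P C).toReal - (P B).toReal| ≤ φs)
    (s : ℕ) (hs : s < L) :
    (P (⋂ k ∈ Finset.Icc 1 N, (A k)ᶜ)).toReal ≤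
      Real.exp (((((N + s - 1) / L + 1 : ℕ) : ℝ) * φs
        - ∑ j ∈ Finset.range ((N + s - 1) / L + 1),
            ((∑ k ∈ Bset N L s j, (P (A k)).toReal)
              - ∑ i ∈ Bset N L s j, ∑ k ∈ Bset N L s j,
                  (if i < k then (P (A i ∩ A k)).toReal else 0))) / 2) := by
  have hL0 : 0 < L := by omega
  set R : ℕ := (N + s - 1) / L + 1 with hR
  set P0 : ℝ := (P (⋂ k ∈ Finset.Icc 1 N, (A k)ᶜ)).toReal with hP0
  have hP0nn : 0 ≤ P0 := ENNReal.toReal_nonneg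
  have hbound : ∀ ε : ℕ, P0 ≤ Real.exp (∑ j ∈ (Finset.range R).filter (fun j => j % 2 = ε),
      (φs - ((∑ k ∈ Bset N L s j, (P (A k)).toReal)
        - ∑ i ∈ Bset N L s j, ∑ k ∈ Bset N L s j,
            (if i < k then (P (A i ∩ A k)).toReal else 0)))) := by
    intro ε
    have hgap : ∀ a ∈ (Finset.range R).filter (fun j => j % 2 = ε),
        ∀ b ∈ (Finset.range R).filter (fun j => j % 2 = ε), a < b → a + 2 ≤ b := by
      intro a ha b hb hab
      have h1 := (Finset.mem_filter.mp ha).2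
      have h2 := (Finset.mem_filter.mp hb).2
      omega
    have hsub : (⋂ k ∈ Finset.Icc 1 N, (A k)ᶜ)
        ⊆ ⋂ j ∈ (Finset.range R).filter (fun j => j % 2 = ε),
            (⋃ k ∈ Bset N L s j, A k)ᶜ := by
      intro x hx
      simp only [Set.mem_iInter] at hx ⊢
      intro j _
      simp only [Set.mem_compl_iff, Set.mem_iUnion]
      rintro ⟨k, hk, hxk⟩
      have hk' := mem_Bset.mp hk
      exact (hx k (Finset.mem_Icc.mpr ⟨hk'.1.1, hk'.1.2⟩)) hxk
    calc P0 ≤ (P (⋂ j ∈ (Finset.range R).filter (fun j => j % 2 = ε),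
            (⋃ k ∈ Bset N L s j, A k)ᶜ)).toReal :=
          ENNReal.toReal_mono (measure_ne_top _ _) (measure_mono hsub)
      _ ≤ _ := chainLemma P N A hA L hL φs hφs hmix s hs _ hgap
  have h0 := hbound 0
  have h1 := hbound 1
  set T0 : ℝ := ∑ j ∈ (Finset.range R).filter (fun j => j % 2 = 0),
      (φs - ((∑ k ∈ Bset N L s j, (P (A k)).toReal)
        - ∑ i ∈ Bset N L s j, ∑ k ∈ Bset N L s j,
            (if i < k then (P (A i ∩ A k)).toReal else 0))) with hT0
  set T1 : ℝ := ∑ j ∈ (Finset.range R).filter (fun j => j % 2 = 1),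
      (φs - ((∑ k ∈ Bset N L s j, (P (A k)).toReal)
        - ∑ i ∈ Bset N L s j, ∑ k ∈ Bset N L s j,
            (if i < k then (P (A i ∩ A k)).toReal else 0))) with hT1
  have hsplit : T0 + T1 = ∑ j ∈ Finset.range R,
      (φs - ((∑ k ∈ Bset N L s j, (P (A k)).toReal)
        - ∑ i ∈ Bset N L s j, ∑ k ∈ Bset N L s j,
            (if i < k then (P (A i ∩ A k)).toReal else 0))) := by
    rw [hT0, hT1]
    have hfc : (Finset.range R).filter (fun j => ¬ j % 2 = 0)
        = (Finset.range R).filter (fun j => j % 2 = 1) := by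
      apply Finset.filter_congr
      intro j _
      constructor <;> (intro h ; omega)
    rw [← hfc]
    exact Finset.sum_filter_add_sum_filter_not _ _ _
  have hsum : ∑ j ∈ Finset.range R,
      (φs - ((∑ k ∈ Bset N L s j, (P (A k)).toReal)
        - ∑ i ∈ Bset N L s j, ∑ k ∈ Bset N L s j,
            (if i < k then (P (A i ∩ A k)).toReal else 0)))
      = (R : ℝ) * φs - ∑ j ∈ Finset.range R,
        ((∑ k ∈ Bset N L s j, (P (A k)).toReal)
          - ∑ i ∈ Bset N L s j, ∑ k ∈ Bset N L s j,
              (if i < k then (P (A i ∩ A k)).toReal else 0)) := by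
    rw [Finset.sum_sub_distrib, Finset.sum_const, Finset.card_range, nsmul_eq_mul]
  have hgoal : (((R : ℕ) : ℝ) * φs - ∑ j ∈ Finset.range R,
        ((∑ k ∈ Bset N L s j, (P (A k)).toReal)
          - ∑ i ∈ Bset N L s j, ∑ k ∈ Bset N L s j,
              (if i < k then (P (A i ∩ A k)).toReal else 0))) / 2 = (T0 + T1) / 2 := by
    rw [hsplit, hsum]
  rw [hgoal]
  have hsq : P0 * P0 ≤ Real.exp ((T0 + T1) / 2) * Real.exp ((T0 + T1) / 2) := by
    have h2 : P0 * P0 ≤ Real.exp T0 * Real.exp T1 :=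
      mul_le_mul h0 h1 hP0nn (Real.exp_pos _).le
    have h3 : Real.exp T0 * Real.exp T1
        = Real.exp ((T0 + T1) / 2) * Real.exp ((T0 + T1) / 2) := by
      rw [← Real.exp_add, ← Real.exp_add]
      ring_nf
    linarith
  nlinarith [Real.exp_pos ((T0 + T1) / 2), hP0nn, hsq]

lemma R_le_ceil {N L s : ℕ} (hL : 0 < L) (hs : s < L) :
    (N + s - 1) / L ≤ ⌈(N : ℝ) / (L : ℝ)⌉₊ := by
  set κ := ⌈(N : ℝ) / (L : ℝ)⌉₊ with hκ
  have hLpos : (0:ℝ) < (L:ℝ) := by exact_mod_cast hL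
  have h1 : (N:ℝ) ≤ (L:ℝ) * (κ:ℝ) := by
    have h := Nat.le_ceil ((N:ℝ)/(L:ℝ))
    calc (N:ℝ) = (N:ℝ)/(L:ℝ) * (L:ℝ) := by field_simp
      _ ≤ (κ:ℝ) * (L:ℝ) := mul_le_mul_of_nonneg_right h hLpos.le
      _ = (L:ℝ) * (κ:ℝ) := mul_comm _ _
  have h2 : N ≤ L * κ := by exact_mod_cast h1
  have h3 : N + s - 1 < (κ + 1) * L := by
    have h5 : (κ+1) * L = L * κ + L := by ring
    omega
  exact Nat.lt_succ_iff.mp ((Nat.div_lt_iff_lt_mul hL).mpr h3)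

end PhiMixingAux


/-- Remark (weighted local-overlap variant of the second-order φ-mixing inequality):
with `T^w_{L−1} = ∑_{1≤i<k≤N, k−i≤L−1} ((L − (k−i))/L)·P(A i ∩ A k)` and
`κ_{N,L} = ⌈N/L⌉ + 1`,
`P(⋃ₖ A k) ≥ 1 − exp(−(1/2)(S_N − T^w_{L−1} − κ_{N,L}·φs)₊)`. -/
theorem second_order_phi_mixing_bound_weighted
    {Ω : Type*} [MeasurableSpace Ω] (P : Measure Ω) [IsProbabilityMeasure P]
    (N : ℕ) (hN : 1 ≤ N)
    (A : ℕ → Set Ω) (hA : ∀ k ∈ Finset.Icc 1 N, MeasurableSet (A k))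
    (L : ℕ) (hL : 2 ≤ L) (φs : ℝ) (hφs : 0 ≤ φs)
    (hmix : ∀ k, 1 ≤ k → k + L + 1 ≤ N →
      ∀ C : Set Ω,
        MeasurableSet[MeasurableSpace.generateFrom (A '' Set.Icc 1 k)] C → 0 < P C →
      ∀ B : Set Ω,
        MeasurableSet[MeasurableSpace.generateFrom (A '' Set.Icc (k + L + 1) N)] B →
          |(P (B ∩ C)).toReal / (P C).toReal - (P B).toReal| ≤ φs) :
    1 - Real.exp (-(1 / 2) *
        max ((∑ k ∈ Finset.Icc 1 N, (P (A k)).toReal)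
          - (∑ p ∈ (Finset.Icc 1 N ×ˢ Finset.Icc 1 N).filter
              (fun p => p.1 < p.2 ∧ p.2 - p.1 ≤ L - 1),
              (((L - (p.2 - p.1) : ℕ) : ℝ) / (L : ℝ)) * (P (A p.1 ∩ A p.2)).toReal)
          - ((⌈(N : ℝ) / (L : ℝ)⌉₊ : ℝ) + 1) * φs) 0) ≤
      (P (⋃ k ∈ Finset.Icc 1 N, A k)).toReal := by
  have hL0 : 0 < L := by omega
  have hLR : (0:ℝ) < (L:ℝ) := by exact_mod_cast hL0
  set S : ℝ := ∑ k ∈ Finset.Icc 1 N, (P (A k)).toReal with hS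
  set T : ℝ := ∑ p ∈ (Finset.Icc 1 N ×ˢ Finset.Icc 1 N).filter
      (fun p => p.1 < p.2 ∧ p.2 - p.1 ≤ L - 1),
      (((L - (p.2 - p.1) : ℕ) : ℝ) / (L : ℝ)) * (P (A p.1 ∩ A p.2)).toReal with hT
  set κ : ℕ := ⌈(N : ℝ) / (L : ℝ)⌉₊ with hκ
  set W : ℕ → ℝ := fun s => ∑ i ∈ Finset.Icc 1 N, ∑ k ∈ Finset.Icc 1 N,
      (if (k + s - 1) / L = (i + s - 1) / L
        then (if i < k then (P (A i ∩ A k)).toReal else 0) else 0) with hW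
  -- Step A/B : block decomposition per shift
  have hUs : ∀ s, ∑ j ∈ Finset.range ((N + s - 1) / L + 1),
      ((∑ k ∈ Bset N L s j, (P (A k)).toReal)
        - ∑ i ∈ Bset N L s j, ∑ k ∈ Bset N L s j,
            (if i < k then (P (A i ∩ A k)).toReal else 0)) = S - W s := by
    intro s
    set R : ℕ := (N + s - 1) / L + 1 with hR
    have hmaps : ∀ k ∈ Finset.Icc 1 N, (k + s - 1) / L ∈ Finset.range R := by
      intro k hk
      have hk' := Finset.mem_Icc.mp hk
      have : (k + s - 1) / L ≤ (N + s - 1) / L :=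
        Nat.div_le_div_right (by omega)
      exact Finset.mem_range.mpr (by omega)
    rw [Finset.sum_sub_distrib]
    have hA1 : ∑ j ∈ Finset.range R, ∑ k ∈ Bset N L s j, (P (A k)).toReal = S := by
      rw [hS]
      exact Finset.sum_fiberwise_of_maps_to hmaps _
    have hA2 : ∑ j ∈ Finset.range R, ∑ i ∈ Bset N L s j, ∑ k ∈ Bset N L s j,
        (if i < k then (P (A i ∩ A k)).toReal else 0) = W s := by
      have h1 : ∀ j, ∑ i ∈ Bset N L s j, ∑ k ∈ Bset N L s j,
          (if i < k then (P (A i ∩ A k)).toReal else 0)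
          = ∑ i ∈ Finset.Icc 1 N, (if (i + s - 1) / L = j then
              (∑ k ∈ Finset.Icc 1 N, (if (k + s - 1) / L = j then
                (if i < k then (P (A i ∩ A k)).toReal else 0) else 0)) else 0) := by
        intro j
        rw [show Bset N L s j = (Finset.Icc 1 N).filter (fun k => (k + s - 1)/L = j) from rfl]
        rw [Finset.sum_filter]
        refine Finset.sum_congr rfl fun i _ => ?_
        by_cases hij : (i + s - 1) / L = j
        · rw [if_pos hij, if_pos hij, Finset.sum_filter]
        · rw [if_neg hij, if_neg hij]
      rw [Finset.sum_congr rfl (fun j _ => h1 j), Finset.sum_comm, hW]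
      refine Finset.sum_congr rfl fun i hi => ?_
      rw [Finset.sum_ite_eq (Finset.range R) ((i + s - 1)/L)
        (fun j => ∑ k ∈ Finset.Icc 1 N, (if (k + s - 1) / L = j then
          (if i < k then (P (A i ∩ A k)).toReal else 0) else 0))]
      rw [if_pos (hmaps i hi)]
    rw [hA1, hA2]
  -- Step D : averaging over shifts
  have hLT : (L:ℝ) * T = ∑ i ∈ Finset.Icc 1 N, ∑ k ∈ Finset.Icc 1 N,
      (if (i < k ∧ k - i ≤ L - 1) then ((L - (k - i) : ℕ) : ℝ) * (P (A i ∩ A k)).toReal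
        else 0) := by
    rw [hT, Finset.sum_filter, Finset.sum_product, Finset.mul_sum]
    refine Finset.sum_congr rfl fun i _ => ?_
    rw [Finset.mul_sum]
    refine Finset.sum_congr rfl fun k _ => ?_
    by_cases h : i < k ∧ k - i ≤ L - 1
    · rw [if_pos h, if_pos h]
      field_simp
    · rw [if_neg h, if_neg h, mul_zero]
  have hmain : ∑ s ∈ Finset.range L, W s ≤ (L:ℝ) * T := by
    rw [hLT]
    have hswap : ∑ s ∈ Finset.range L, W s
        = ∑ i ∈ Finset.Icc 1 N, ∑ k ∈ Finset.Icc 1 N, ∑ x ∈ Finset.range L,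
          (if (k + x - 1) / L = (i + x - 1) / L
            then (if i < k then (P (A i ∩ A k)).toReal else 0) else 0) := by
      simp only [hW]
      rw [Finset.sum_comm]
      exact Finset.sum_congr rfl fun i _ => Finset.sum_comm
    rw [hswap]
    refine Finset.sum_le_sum fun i hi => Finset.sum_le_sum fun k hk => ?_
    have hi1 : 1 ≤ i := (Finset.mem_Icc.mp hi).1
    have hq : (0:ℝ) ≤ (P (A i ∩ A k)).toReal := ENNReal.toReal_nonneg
    by_cases hik : i < k
    · by_cases hd : k - i ≤ L - 1
      · rw [if_pos (show i < k ∧ k - i ≤ L - 1 from ⟨hik, hd⟩)]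
        have hrw : ∀ x, (if (k + x - 1) / L = (i + x - 1) / L
            then (if i < k then (P (A i ∩ A k)).toReal else 0) else 0)
            = (if (i + x - 1) / L = (i + (k - i) + x - 1) / L
                then (P (A i ∩ A k)).toReal else 0) := by
          intro x
          have hk' : i + (k - i) = k := by omega
          rw [hk', if_pos hik]
          by_cases h : (k + x - 1) / L = (i + x - 1) / L
          · rw [if_pos h, if_pos h.symm]
          · rw [if_neg h, if_neg (fun hh => h hh.symm)]
        simp only [hrw]
        rw [← Finset.sum_filter, Finset.sum_const, nsmul_eq_mul]
        have hcard := count_same_block (L := L) (i := i) (d := k - i) hL0 hi1 (by omega)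
        have hcast : (((Finset.range L).filter
            (fun x => (i + x - 1) / L = (i + (k - i) + x - 1) / L)).card : ℝ)
            ≤ ((L - (k - i) : ℕ) : ℝ) := by exact_mod_cast hcard
        exact mul_le_mul_of_nonneg_right hcast hq
      · rw [if_neg (fun hcon : i < k ∧ k - i ≤ L - 1 => hd hcon.2)]
        refine le_of_eq (Finset.sum_eq_zero fun x _ => ?_)
        by_cases h : (k + x - 1) / L = (i + x - 1) / L
        · exact absurd (dist_of_same_block hL0 hi1 hik h.symm) hd
        · rw [if_neg h]
    · rw [if_neg (fun hcon : i < k ∧ k - i ≤ L - 1 => hik hcon.1)]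
      refine le_of_eq (Finset.sum_eq_zero fun x _ => ?_)
      simp [hik]
  -- Step E : pigeonhole over shifts
  have hex : ∃ s ∈ Finset.range L, W s ≤ T := by
    refine Finset.exists_le_of_sum_le ⟨0, Finset.mem_range.mpr hL0⟩ ?_
    calc ∑ s ∈ Finset.range L, W s ≤ (L:ℝ) * T := hmain
      _ = ∑ _s ∈ Finset.range L, T := by
          rw [Finset.sum_const, Finset.card_range, nsmul_eq_mul]
  obtain ⟨s, hsr, hWsT⟩ := hex
  have hsL : s < L := Finset.mem_range.mp hsr
  -- Step F : apply the shift bound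
  have hP0 := shift_bound P N A hA L hL φs hφs hmix s hsL
  rw [hUs s] at hP0
  have hRκ : ((N + s - 1) / L + 1 : ℕ) ≤ κ + 1 := by
    have := R_le_ceil (N := N) (L := L) (s := s) hL0 hsL
    omega
  have hRcast : (((N + s - 1) / L + 1 : ℕ) : ℝ) ≤ (κ : ℝ) + 1 := by
    exact_mod_cast hRκ
  -- Step G : conclude
  have hUmeas : MeasurableSet (⋃ k ∈ Finset.Icc 1 N, A k) :=
    (Finset.Icc 1 N).measurableSet_biUnion hA
  have hcc : (⋂ k ∈ Finset.Icc 1 N, (A k)ᶜ) = (⋃ k ∈ Finset.Icc 1 N, A k)ᶜ := by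
    simp [Set.compl_iUnion]
  have hcompl : (P (⋃ k ∈ Finset.Icc 1 N, A k)).toReal
      + (P (⋂ k ∈ Finset.Icc 1 N, (A k)ᶜ)).toReal = 1 := by
    rw [hcc, toReal_compl P hUmeas]; ring
  have hfin : (P (⋂ k ∈ Finset.Icc 1 N, (A k)ᶜ)).toReal
      ≤ Real.exp (-(1 / 2) * max (S - T - ((κ : ℝ) + 1) * φs) 0) := by
    rcases le_or_gt (S - T - ((κ : ℝ) + 1) * φs) 0 with hx | hx
    · rw [max_eq_right hx, mul_zero, Real.exp_zero]
      have h := ENNReal.toReal_mono ENNReal.one_ne_top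
        (prob_le_one (μ := P) (s := ⋂ k ∈ Finset.Icc 1 N, (A k)ᶜ))
      simpa using h
    · rw [max_eq_left hx.le]
      refine le_trans hP0 (Real.exp_le_exp.mpr ?_)
      have h1 : (((N + s - 1) / L + 1 : ℕ) : ℝ) * φs ≤ ((κ : ℝ) + 1) * φs :=
        mul_le_mul_of_nonneg_right hRcast hφs
      linarith
  linarith
end

section
/- For an integer m ≥ 0, call a finite family of events A₁, …, A_N on a probability space m-dependent if for any two index sets I, J ⊆ {1, …, N} with min{|i − j| : i ∈ I, j ∈ J} > m, the σ-algebras σ(A_i : i ∈ I) and σ(A_j : j ∈ J) are independent. Define c_m* as the supremum of all c > 0 such that P(⋃_{k=1}^N A_k) ≥ 1 − exp(−c·∑_{k=1}^N P(A_k)) holds for every finite m-dependent family of events on every probability space. Then c_m* = 1/(m+1). -/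
set_option maxHeartbeats 1000000

open MeasureTheory MeasurableSpace ProbabilityTheory


open MeasureTheory

/-- A finite family of events `A 1, …, A N` is `m`-dependent if any two subcollections
whose index sets are separated by more than `m` positions generate independent
σ-algebras. -/
def MDepFamily {Ω : Type} [MeasurableSpace Ω] (P : Measure Ω)
    (m N : ℕ) (A : ℕ → Set Ω) : Prop :=
  ∀ I J : Finset ℕ, ↑I ⊆ Set.Icc 1 N → ↑J ⊆ Set.Icc 1 N →
    (∀ i ∈ I, ∀ j ∈ J, m < Nat.dist i j) →
    ProbabilityTheory.Indep (MeasurableSpace.generateFrom (A '' ↑I))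
      (MeasurableSpace.generateFrom (A '' ↑J)) P

lemma prod_compl_of_sep {Ω : Type} [MeasurableSpace Ω] (P : Measure Ω) [IsProbabilityMeasure P]
    (m N : ℕ) (A : ℕ → Set Ω)
    (hdep : MDepFamily P m N A) (R : Finset ℕ)
    (hR : ↑R ⊆ Set.Icc 1 N) (hsep : ∀ i ∈ R, ∀ j ∈ R, i ≠ j → m < Nat.dist i j) :
    P (⋂ k ∈ R, (A k)ᶜ) = ∏ k ∈ R, P ((A k)ᶜ) := by
  classical
  induction R using Finset.induction with
  | empty => simp
  | @insert a R ha ih =>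
    have hRsub : (↑R : Set ℕ) ⊆ Set.Icc 1 N := by
      refine subset_trans ?_ hR
      exact_mod_cast Finset.coe_subset.2 (Finset.subset_insert a R)
    have hasub : (↑({a} : Finset ℕ) : Set ℕ) ⊆ Set.Icc 1 N := by
      intro x hx
      simp only [Finset.coe_singleton, Set.mem_singleton_iff] at hx
      exact hR (by simp [hx])
    have hInd := hdep {a} R hasub hRsub (by
      intro i hi j hj
      simp only [Finset.mem_singleton] at hi
      subst hi
      exact hsep i (Finset.mem_insert_self _ _) j (Finset.mem_insert_of_mem hj)
        (fun h => ha (h ▸ hj)))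
    have hmul := (Indep_iff _ _ _).1 hInd ((A a)ᶜ) (⋂ k ∈ R, (A k)ᶜ)
      (MeasurableSet.compl (measurableSet_generateFrom (by simp)))
      (MeasurableSet.biInter R.countable_toSet (fun j hj =>
        MeasurableSet.compl (measurableSet_generateFrom ⟨j, hj, rfl⟩)))
    rw [Finset.set_biInter_insert, hmul, Finset.prod_insert ha,
      ih hRsub (fun i hi j hj hij => hsep i (Finset.mem_insert_of_mem hi) j
        (Finset.mem_insert_of_mem hj) hij)]

lemma key_ineq {Ω : Type} [MeasurableSpace Ω] (P : Measure Ω) [IsProbabilityMeasure P]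
    (m N : ℕ) (A : ℕ → Set Ω)
    (hmeas : ∀ k ∈ Finset.Icc 1 N, MeasurableSet (A k))
    (hdep : MDepFamily P m N A) :
    1 - Real.exp (-(1/((m:ℝ)+1) * ∑ k ∈ Finset.Icc 1 N, (P (A k)).toReal)) ≤
      (P (⋃ k ∈ Finset.Icc 1 N, A k)).toReal := by
  classical
  set p : ℕ → ℝ := fun k => (P (A k)).toReal with hp
  set S : ℝ := ∑ k ∈ Finset.Icc 1 N, p k with hS
  -- choose best residue class
  have hfib : ∑ r ∈ Finset.range (m+1),
      ∑ k ∈ (Finset.Icc 1 N).filter (fun k => k % (m+1) = r), p k = S := by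
    exact Finset.sum_fiberwise_of_maps_to (fun x _ => Finset.mem_range.2 (Nat.mod_lt _ (Nat.succ_pos m))) p
  have hmpos : (0:ℝ) < (m:ℝ) + 1 := by positivity
  obtain ⟨r, hr, hge⟩ : ∃ r ∈ Finset.range (m+1),
      S / ((m:ℝ)+1) ≤ ∑ k ∈ (Finset.Icc 1 N).filter (fun k => k % (m+1) = r), p k := by
    apply Finset.exists_le_of_sum_le (Finset.nonempty_range_iff.2 (Nat.succ_ne_zero m))
    rw [hfib, Finset.sum_const, Finset.card_range, nsmul_eq_mul]
    push_cast
    rw [mul_div_cancel₀ _ (ne_of_gt hmpos)]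
  set C : Finset ℕ := (Finset.Icc 1 N).filter (fun k => k % (m+1) = r) with hC
  have hCsub' : C ⊆ Finset.Icc 1 N := Finset.filter_subset _ _
  have hCsub : (↑C : Set ℕ) ⊆ Set.Icc 1 N := by
    intro x hx
    have := hCsub' (by exact_mod_cast hx)
    simpa [Set.mem_Icc] using Finset.mem_Icc.1 this
  have hsep : ∀ i ∈ C, ∀ j ∈ C, i ≠ j → m < Nat.dist i j := by
    intro i hi j hj hij
    have hi' : i % (m+1) = r := (Finset.mem_filter.1 hi).2
    have hj' : j % (m+1) = r := (Finset.mem_filter.1 hj).2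
    have hmod : i % (m+1) = j % (m+1) := hi'.trans hj'.symm
    rcases lt_or_gt_of_ne hij with h | h
    · have hdvd : (m+1) ∣ j - i := (Nat.modEq_iff_dvd' h.le).1 hmod
      have : m + 1 ≤ j - i := Nat.le_of_dvd (by omega) hdvd
      rw [Nat.dist_eq_sub_of_le h.le]; omega
    · have hdvd : (m+1) ∣ i - j := (Nat.modEq_iff_dvd' h.le).1 hmod.symm
      have : m + 1 ≤ i - j := Nat.le_of_dvd (by omega) hdvd
      rw [Nat.dist_comm, Nat.dist_eq_sub_of_le h.le]; omega
  have hprod := prod_compl_of_sep P m N A hdep C hCsub hsep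
  have hmeasC : ∀ k ∈ C, MeasurableSet (A k) := fun k hk => hmeas k (hCsub' hk)
  have hcompl : ∀ k ∈ C, (P (A k)ᶜ).toReal = 1 - p k := by
    intro k hk
    rw [prob_compl_eq_one_sub (hmeasC k hk),
      ENNReal.toReal_sub_of_le prob_le_one ENNReal.one_ne_top, ENNReal.toReal_one]
  have hinterMeas : MeasurableSet (⋂ k ∈ C, (A k)ᶜ) :=
    MeasurableSet.biInter C.countable_toSet (fun k hk => (hmeasC k hk).compl)
  have hUeq : (⋃ k ∈ C, A k) = (⋂ k ∈ C, (A k)ᶜ)ᶜ := by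
    ext x; simp
  have hPU : (P (⋃ k ∈ C, A k)).toReal = 1 - ∏ k ∈ C, (1 - p k) := by
    rw [hUeq, prob_compl_eq_one_sub hinterMeas,
      ENNReal.toReal_sub_of_le prob_le_one ENNReal.one_ne_top, ENNReal.toReal_one,
      hprod, ENNReal.toReal_prod, Finset.prod_congr rfl hcompl]
  have hmono : (P (⋃ k ∈ C, A k)).toReal ≤ (P (⋃ k ∈ Finset.Icc 1 N, A k)).toReal := by
    apply ENNReal.toReal_mono (measure_ne_top _ _)
    apply measure_mono
    exact Set.iUnion₂_subset fun k hk => Set.subset_biUnion_of_mem (hCsub' hk)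
  have hprodle : ∏ k ∈ C, (1 - p k) ≤ Real.exp (-(∑ k ∈ C, p k)) := by
    rw [← Finset.sum_neg_distrib, Real.exp_sum]
    apply Finset.prod_le_prod
    · intro i hi; rw [← hcompl i hi]; exact ENNReal.toReal_nonneg
    · intro i hi
      have := Real.add_one_le_exp (-(p i))
      linarith
  have hexp : Real.exp (-(∑ k ∈ C, p k)) ≤ Real.exp (-(1/((m:ℝ)+1) * S)) := by
    apply Real.exp_le_exp.2
    rw [neg_le_neg_iff, one_div, inv_mul_eq_div]
    exact hge
  calc 1 - Real.exp (-(1/((m:ℝ)+1) * S)) ≤ 1 - ∏ k ∈ C, (1 - p k) := by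
        linarith
    _ = (P (⋃ k ∈ C, A k)).toReal := hPU.symm
    _ ≤ _ := hmono

/-- Proposition (sharpness of the `m`-dependent constant): the supremum of all `c > 0`
such that `P(⋃ₖ A k) ≥ 1 − exp(−c ∑ₖ P(A k))` holds for every finite `m`-dependent
family of events on every probability space equals `1/(m+1)`. -/
theorem m_dependent_constant_sharp (m : ℕ) :
    sSup {c : ℝ | 0 < c ∧
        ∀ (Ω : Type) (inst : MeasurableSpace Ω) (P : Measure Ω),
          IsProbabilityMeasure P →
          ∀ N : ℕ, 1 ≤ N → ∀ A : ℕ → Set Ω,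
            (∀ k ∈ Finset.Icc 1 N, MeasurableSet (A k)) →
            MDepFamily P m N A →
            1 - Real.exp (-(c * ∑ k ∈ Finset.Icc 1 N, (P (A k)).toReal)) ≤
              (P (⋃ k ∈ Finset.Icc 1 N, A k)).toReal}
      = 1 / ((m : ℝ) + 1) := by
  have hmpos : (0:ℝ) < (m:ℝ) + 1 := by positivity
  have hmem : (1 / ((m:ℝ)+1)) ∈ {c : ℝ | 0 < c ∧
        ∀ (Ω : Type) (inst : MeasurableSpace Ω) (P : Measure Ω),
          IsProbabilityMeasure P →
          ∀ N : ℕ, 1 ≤ N → ∀ A : ℕ → Set Ω,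
            (∀ k ∈ Finset.Icc 1 N, MeasurableSet (A k)) →
            MDepFamily P m N A →
            1 - Real.exp (-(c * ∑ k ∈ Finset.Icc 1 N, (P (A k)).toReal)) ≤
              (P (⋃ k ∈ Finset.Icc 1 N, A k)).toReal} := by
    refine ⟨by positivity, ?_⟩
    intro Ω inst P hP N hN A hmeas hdep
    exact key_ineq P m N A hmeas hdep
  have hub : ∀ c ∈ {c : ℝ | 0 < c ∧
        ∀ (Ω : Type) (inst : MeasurableSpace Ω) (P : Measure Ω),
          IsProbabilityMeasure P →
          ∀ N : ℕ, 1 ≤ N → ∀ A : ℕ → Set Ω,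
            (∀ k ∈ Finset.Icc 1 N, MeasurableSet (A k)) →
            MDepFamily P m N A →
            1 - Real.exp (-(c * ∑ k ∈ Finset.Icc 1 N, (P (A k)).toReal)) ≤
              (P (⋃ k ∈ Finset.Icc 1 N, A k)).toReal}, c ≤ 1 / ((m:ℝ)+1) := by
    rintro c ⟨hc0, hc⟩
    by_contra hgt
    push_neg at hgt
    set t : ℝ := c * ((m:ℝ)+1) with htdef
    have ht : 1 < t := by
      rw [div_lt_iff₀ hmpos] at hgt
      linarith
    set q : ℝ := (t-1)/(2*t) with hqdef
    have ht0 : (0:ℝ) < t := by linarith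
    have hq0 : 0 < q := div_pos (by linarith) (by linarith)
    have hq1 : q < 1 := by
      rw [hqdef, div_lt_one (by linarith)]
      linarith
    set pE : ENNReal := ENNReal.ofReal q with hpEdef
    have hpE1 : pE ≤ 1 := ENNReal.ofReal_le_one.2 hq1.le
    set P : Measure Bool := pE • Measure.dirac true + (1 - pE) • Measure.dirac false with hPdef
    have hPprob : IsProbabilityMeasure P := by
      constructor
      rw [hPdef]
      simp only [Measure.add_apply, Measure.smul_apply, smul_eq_mul, measure_univ, mul_one]
      exact add_tsub_cancel_of_le hpE1
    have hPtrue : P ({true} : Set Bool) = pE := by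
      rw [hPdef]
      simp [Measure.dirac_apply]
    set A : ℕ → Set Bool := fun _ => ({true} : Set Bool) with hAdef
    have hmeasA : ∀ k ∈ Finset.Icc 1 (m+1), MeasurableSet (A k) := fun _ _ => trivial
    have hdep : MDepFamily P m (m+1) A := by
      intro I J hI hJ hd
      rcases Finset.eq_empty_or_nonempty I with hIe | ⟨i, hi⟩
      · subst hIe
        simp only [Finset.coe_empty, Set.image_empty, MeasurableSpace.generateFrom_empty]
        exact ProbabilityTheory.indep_bot_left _
      rcases Finset.eq_empty_or_nonempty J with hJe | ⟨j, hj⟩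
      · subst hJe
        simp only [Finset.coe_empty, Set.image_empty, MeasurableSpace.generateFrom_empty]
        exact ProbabilityTheory.indep_bot_right _
      exfalso
      have hdij := hd i hi j hj
      have hi' := hI (Finset.mem_coe.2 hi)
      have hj' := hJ (Finset.mem_coe.2 hj)
      simp only [Set.mem_Icc] at hi' hj'
      simp only [Nat.dist] at hdij
      omega
    have hkey := hc Bool Bool.instMeasurableSpace P hPprob (m+1) (by omega) A hmeasA hdep
    have hU : (⋃ k ∈ Finset.Icc 1 (m+1), A k) = ({true} : Set Bool) := by
      apply le_antisymm
      · exact Set.iUnion₂_subset fun _ _ => subset_rfl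
      · exact fun x hx => Set.mem_iUnion₂.2 ⟨1, by simp, hx⟩
    have hpEreal : pE.toReal = q := ENNReal.toReal_ofReal hq0.le
    have hsum : ∑ k ∈ Finset.Icc 1 (m+1), (P (A k)).toReal = ((m:ℝ)+1) * q := by
      have hterm : ∀ k ∈ Finset.Icc 1 (m+1), (P (A k)).toReal = q := fun k _ => by
        rw [show A k = ({true} : Set Bool) from rfl, hPtrue, hpEreal]
      rw [Finset.sum_congr rfl hterm, Finset.sum_const, Nat.card_Icc, nsmul_eq_mul]
      push_cast
      ring
    rw [hU, hsum, hPtrue, hpEreal] at hkey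
    have hexponent : c * (((m:ℝ)+1) * q) = t * q := by rw [htdef]; ring
    rw [hexponent] at hkey
    -- hkey : 1 - exp (-(t*q)) ≤ q, contradiction
    have hexp1 : t*q + 1 ≤ Real.exp (t*q) := Real.add_one_le_exp _
    have hexppos := Real.exp_pos (t*q)
    have e3 : Real.exp (-(t*q)) * Real.exp (t*q) = 1 := by
      rw [← Real.exp_add]; simp
    have e1 : (1 - q) * Real.exp (t*q) ≤ Real.exp (-(t*q)) * Real.exp (t*q) :=
      mul_le_mul_of_nonneg_right (by linarith) hexppos.le
    have e2 : (1 - q) * (t*q + 1) ≤ (1 - q) * Real.exp (t*q) :=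
      mul_le_mul_of_nonneg_left hexp1 (by linarith)
    have e4 : (1 - q) * (t*q + 1) ≤ 1 := by
      calc (1 - q) * (t*q + 1) ≤ (1 - q) * Real.exp (t*q) := e2
        _ ≤ Real.exp (-(t*q)) * Real.exp (t*q) := e1
        _ = 1 := e3
    have htq : t * q = (t-1)/2 := by
      rw [hqdef]; field_simp
    rw [htq] at e4
    have hcontra : (1 - q) * ((t-1)/2 + 1) > 1 := by
      have h1 : 1 - q > 0 := by linarith
      nlinarith [mul_pos hq0 (show (0:ℝ) < (t-1)/2 by linarith)]
    linarith
  refine le_antisymm (csSup_le ⟨_, hmem⟩ hub) (le_csSup ⟨_, hub⟩ hmem)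
end

section
/- For an integer m ≥ 0, call a finite family of events A₁, …, A_N on a probability space m-dependent if for any two index sets I, J ⊆ {1, …, N} with min{|i − j| : i ∈ I, j ∈ J} > m, the σ-algebras σ(A_i : i ∈ I) and σ(A_j : j ∈ J) are independent. Then for every c > 1/(m+1) there exist an integer N ≥ 1, a probability space (Ω, ℱ, P), and an m-dependent family of events A₁, …, A_N on it such that P(⋃_{k=1}^N A_k) < 1 − exp(−c·∑_{k=1}^N P(A_k)). -/
open MeasureTheory

/-- Bernoulli-type measure on `Bool`. -/
noncomputable def bern (p : ℝ) : Measure Bool :=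
  (ENNReal.ofReal p) • Measure.dirac true + (ENNReal.ofReal (1 - p)) • Measure.dirac false

lemma bern_prob (p : ℝ) (h0 : 0 ≤ p) (h1 : p ≤ 1) : IsProbabilityMeasure (bern p) := by
  constructor
  simp [bern, Measure.dirac_apply, ← ENNReal.ofReal_add, h0, sub_nonneg.mpr h1]

lemma bern_true (p : ℝ) : bern p {true} = ENNReal.ofReal p := by
  simp [bern, Measure.dirac_apply']

/-- No constant `c > 1/(m+1)` is admissible: for each such `c` there is a finite
`m`-dependent family of events on some probability space with
`P(⋃ₖ A k) < 1 − exp(−c ∑ₖ P(A k))`. -/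
theorem m_dependent_constant_upper (m : ℕ) (c : ℝ) (hc : 1 / ((m : ℝ) + 1) < c) :
    ∃ N : ℕ, 1 ≤ N ∧
      ∃ (Ω : Type) (inst : MeasurableSpace Ω) (P : Measure Ω),
        IsProbabilityMeasure P ∧
        ∃ A : ℕ → Set Ω,
          (∀ k ∈ Finset.Icc 1 N, MeasurableSet (A k)) ∧
          MDepFamily P m N A ∧
          (P (⋃ k ∈ Finset.Icc 1 N, A k)).toReal <
            1 - Real.exp (-(c * ∑ k ∈ Finset.Icc 1 N, (P (A k)).toReal)) := by
  set a : ℝ := c * ((m : ℝ) + 1) with ha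
  have ha1 : 1 < a := by
    rw [ha]
    rw [div_lt_iff₀ (by positivity)] at hc
    linarith
  set p : ℝ := (a - 1) / (2 * a) with hp
  have hp0 : 0 < p := div_pos (by linarith) (by linarith)
  have hp1 : p < 1 / 2 := by
    rw [hp, div_lt_iff₀ (by positivity)]; nlinarith
  have hp1' : p < 1 := by linarith
  -- key inequality : exp (-(a*p)) < 1 - p
  have hkey : Real.exp (-(a * p)) < 1 - p := by
    have h1p : (0:ℝ) < 1 - p := by linarith
    have hlog : Real.log (1 / (1 - p)) ≤ 1 / (1 - p) - 1 :=
      Real.log_le_sub_one_of_pos (by positivity)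
    have hlog2 : -Real.log (1 - p) ≤ p / (1 - p) := by
      rw [one_div, Real.log_inv] at hlog
      have : 1 / (1 - p) - 1 = p / (1 - p) := by field_simp; ring
      rw [one_div] at this; linarith [this ▸ hlog]
    have hfrac : p / (1 - p) < a * p := by
      rw [div_lt_iff₀ h1p]
      have hap : a * p = (a - 1) / 2 := by rw [hp]; field_simp
      nlinarith
    have : -(a * p) < Real.log (1 - p) := by linarith
    calc Real.exp (-(a * p)) < Real.exp (Real.log (1 - p)) := Real.exp_lt_exp.mpr this
      _ = 1 - p := Real.exp_log h1p
  refine ⟨m + 1, le_add_self, Bool, inferInstance, bern p, bern_prob p hp0.le hp1'.le,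
    fun _ => {true}, fun k _ => trivial, ?_, ?_⟩
  · -- m-dependence
    intro I J hI hJ hd
    have : IsProbabilityMeasure (bern p) := bern_prob p hp0.le hp1'.le
    rcases I.eq_empty_or_nonempty with rfl | ⟨i, hi⟩
    · simp only [Finset.coe_empty, Set.image_empty, MeasurableSpace.generateFrom_empty]
      exact ProbabilityTheory.indep_bot_left _
    rcases J.eq_empty_or_nonempty with rfl | ⟨j, hj⟩
    · simp only [Finset.coe_empty, Set.image_empty, MeasurableSpace.generateFrom_empty]
      exact ProbabilityTheory.indep_bot_right _
    exfalso
    have hi' := hI hi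
    have hj' := hJ hj
    simp only [Set.mem_Icc] at hi' hj'
    have := hd i hi j hj
    rw [Nat.dist] at this
    omega
  · -- the probability inequality
    have hU : (⋃ k ∈ Finset.Icc 1 (m + 1), ({true} : Set Bool)) = {true} := by
      apply Set.biUnion_const
      exact ⟨1, Finset.mem_Icc.mpr ⟨le_refl 1, by omega⟩⟩
    rw [hU, bern_true, ENNReal.toReal_ofReal hp0.le]
    have hsum : ∑ k ∈ Finset.Icc 1 (m + 1), ((bern p) {true}).toReal = ((m : ℝ) + 1) * p := by
      rw [bern_true, ENNReal.toReal_ofReal hp0.le, Finset.sum_const, Nat.card_Icc]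
      push_cast
      ring
    rw [hsum]
    have : c * (((m : ℝ) + 1) * p) = a * p := by rw [ha]; ring
    rw [this]
    linarith
end
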